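/- arXiv:1210.2051 — 5 statements merged into one kernel-verified Lean document; each statement's English description precedes it below -/
import Mathlib

section
/- For every j ∈ ℕ there exists c ∈ ℕ, depending only on j, such that for every i ∈ ℕ, every TxtFex^i_j-learnable family of nonempty c.e. sets is TxtFext^{c·i}_j-learnable, i.e., TxtFex^i_j ⊆ TxtFext^{ci}_j. -/
open Filter

/-- The `a`-th computably enumerable set: the domain of the `a`-th partial
computable function, under the standard numbering via `Nat.Partrec.Code`. -/
def W (a : ℕ) : Set ℕ := {x | ((Denumerable.ofNat Nat.Partrec.Code a).eval x).Dom}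

/-- The stage-`s` approximation `W_{a,s}` of the `a`-th c.e. set. -/
def Wstage (a s : ℕ) : Set ℕ :=
  {x | (Nat.Partrec.Code.evaln s (Denumerable.ofNat Nat.Partrec.Code a) x).isSome}

/-- `A` is computably enumerable. -/
def IsCE (A : Set ℕ) : Prop := ∃ a : ℕ, A = W a

/-- The content (set of values) of a finite sequence. -/
def content (σ : List ℕ) : Set ℕ := {x | x ∈ σ}

/-- The initial segment `f↾n` of a text `f`. -/
def seg (f : ℕ → ℕ) (n : ℕ) : List ℕ := (List.range n).map f

/-- `A =* B` : the symmetric difference of `A` and `B` is finite. -/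
def eqStar (A B : Set ℕ) : Prop := (symmDiff A B).Finite

/-- `A =^i B` : the symmetric difference of `A` and `B` has cardinality at most `i`. -/
def eqWithin (i : ℕ) (A B : Set ℕ) : Prop :=
  (symmDiff A B).Finite ∧ (symmDiff A B).ncard ≤ i

/-- Accuracy parameter: `some i` means `=^i`, `none` means `=*`. -/
def Accurate : Option ℕ → Set ℕ → Set ℕ → Prop
  | none => eqStar
  | some i => eqWithin i

/-- Cardinality bound parameter: `some j` bounds `card S ≤ j`, `none` ( `*` ) is no bound. -/
def CardOK : Option ℕ → Finset ℕ → Prop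
  | none => fun _ => True
  | some j => fun S => S.card ≤ j

/-- `M` TxtFex^i_j-identifies the text `f`. -/
def FexIdentifies (i j : Option ℕ) (M : List ℕ → ℕ) (f : ℕ → ℕ) : Prop :=
  ∃ S : Finset ℕ, CardOK j S ∧ (∀ᶠ n in atTop, M (seg f n) ∈ S) ∧
    ∀ a ∈ S, Accurate i (W a) (Set.range f)

/-- `M` TxtFext^i_j-identifies the text `f`. -/
def FextIdentifies (i j : Option ℕ) (M : List ℕ → ℕ) (f : ℕ → ℕ) : Prop :=
  ∃ S : Finset ℕ, CardOK j S ∧ (∀ᶠ n in atTop, M (seg f n) ∈ S) ∧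
    (∀ a ∈ S, Accurate i (W a) (Set.range f)) ∧ (∀ a ∈ S, ∀ b ∈ S, W a = W b)

/-- `M` TxtFex^i_j-learns the set `A` : it identifies every text for `A`. -/
def FexLearnsSet (i j : Option ℕ) (M : List ℕ → ℕ) (A : Set ℕ) : Prop :=
  ∀ f : ℕ → ℕ, Set.range f = A → FexIdentifies i j M f

/-- `M` TxtFext^i_j-learns the set `A`. -/
def FextLearnsSet (i j : Option ℕ) (M : List ℕ → ℕ) (A : Set ℕ) : Prop :=
  ∀ f : ℕ → ℕ, Set.range f = A → FextIdentifies i j M f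

/-- `M` TxtFex^i_j-learns the family `𝓕`. -/
def FexLearnsFamily (i j : Option ℕ) (M : List ℕ → ℕ) (𝓕 : Set (Set ℕ)) : Prop :=
  ∀ A ∈ 𝓕, FexLearnsSet i j M A

/-- `M` TxtFext^i_j-learns the family `𝓕`. -/
def FextLearnsFamily (i j : Option ℕ) (M : List ℕ → ℕ) (𝓕 : Set (Set ℕ)) : Prop :=
  ∀ A ∈ 𝓕, FextLearnsSet i j M A

/-- `𝓕` is TxtFex^i_j-learnable: some computable learner learns it. -/
def FexLearnable (i j : Option ℕ) (𝓕 : Set (Set ℕ)) : Prop :=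
  ∃ M : List ℕ → ℕ, Computable M ∧ FexLearnsFamily i j M 𝓕

/-- `𝓕` is TxtFext^i_j-learnable. -/
def FextLearnable (i j : Option ℕ) (𝓕 : Set (Set ℕ)) : Prop :=
  ∃ M : List ℕ → ℕ, Computable M ∧ FextLearnsFamily i j M 𝓕

/-- A family of nonempty c.e. sets. -/
def NiceFamily (𝓕 : Set (Set ℕ)) : Prop := ∀ A ∈ 𝓕, A.Nonempty ∧ IsCE A

namespace S4

open Nat.Partrec Nat.Partrec.Code

/-! ### §0 generic helpers -/

lemma finite_ncard_le {S : Set ℕ} {k : ℕ}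
    (h : ∀ F : Finset ℕ, ↑F ⊆ S → F.card ≤ k) : S.Finite ∧ S.ncard ≤ k := by
  have hfin : S.Finite := by
    by_contra hinf
    have hinf' : S.Infinite := hinf
    obtain ⟨t, hts, htfin, htcard⟩ := hinf'.exists_subset_ncard_eq (k + 1)
    have := h htfin.toFinset (by simpa using hts)
    rw [← Set.ncard_coe_finset, Set.Finite.coe_toFinset] at this
    omega
  refine ⟨hfin, ?_⟩
  have h2 := h hfin.toFinset (by simp)
  have h3 : S.ncard = hfin.toFinset.card := by
    rw [← Set.ncard_coe_finset, Set.Finite.coe_toFinset]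
  omega

lemma ncard_listUnion_le {β : Type*} (g : β → Set ℕ) (k : ℕ) :
    ∀ L : List β, (∀ b ∈ L, (g b).Finite ∧ (g b).ncard ≤ k) →
      (⋃ b ∈ L, g b).Finite ∧ (⋃ b ∈ L, g b).ncard ≤ L.length * k := by
  intro L
  induction L with
  | nil => intro _; simp
  | cons c L ih =>
    intro h
    have hU : (⋃ b ∈ (c :: L), g b) = g c ∪ ⋃ b ∈ L, g b := by
      ext x
      simp only [Set.mem_iUnion, List.mem_cons, Set.mem_union, exists_prop]
      constructor
      · rintro ⟨b, hb | hb, hx⟩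
        · exact Or.inl (hb ▸ hx)
        · exact Or.inr ⟨b, hb, hx⟩
      · rintro (hx | ⟨b, hb, hx⟩)
        · exact ⟨c, Or.inl rfl, hx⟩
        · exact ⟨b, Or.inr hb, hx⟩
    have hc := h c (by simp)
    have hL := ih (fun b hb => h b (List.mem_cons_of_mem _ hb))
    rw [hU]
    refine ⟨hc.1.union hL.1, ?_⟩
    calc (g c ∪ ⋃ b ∈ L, g b).ncard ≤ (g c).ncard + (⋃ b ∈ L, g b).ncard :=
          Set.ncard_union_le _ _
      _ ≤ k + L.length * k := Nat.add_le_add hc.2 hL.2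
      _ = (c :: L).length * k := by simp [Nat.succ_mul, Nat.add_comm]

/-! ### §1 stage approximations -/

/-- the code of `b` -/
def cod (b : ℕ) : Nat.Partrec.Code := Denumerable.ofNat Nat.Partrec.Code b

/-- Finite stage approximation of `W b`. -/
def WF (b s : ℕ) : Finset ℕ :=
  (Finset.range s).filter fun x => (Nat.Partrec.Code.evaln s (cod b) x).isSome

lemma mem_WF {b s x : ℕ} : x ∈ WF b s ↔ x < s ∧ (evaln s (cod b) x).isSome := by
  simp [WF]

lemma WF_mono {s s' : ℕ} (h : s ≤ s') (b : ℕ) : WF b s ⊆ WF b s' := by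
  intro x hx
  rw [mem_WF] at hx ⊢
  obtain ⟨y, hy⟩ := Option.isSome_iff_exists.1 hx.2
  exact ⟨lt_of_lt_of_le hx.1 h, Option.isSome_iff_exists.2
    ⟨y, evaln_mono h (show y ∈ evaln s (cod b) x from hy)⟩⟩

lemma mem_W_iff {b x : ℕ} : x ∈ W b ↔ ∃ s, x ∈ WF b s := by
  constructor
  · intro hx
    obtain ⟨y, hy⟩ := Part.dom_iff_mem.1 hx
    obtain ⟨k, hk⟩ := evaln_complete.1 hy
    exact ⟨k, mem_WF.2 ⟨evaln_bound hk, Option.isSome_iff_exists.2 ⟨y, hk⟩⟩⟩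
  · rintro ⟨s, hs⟩
    rw [mem_WF] at hs
    obtain ⟨y, hy⟩ := Option.isSome_iff_exists.1 hs.2
    exact Part.dom_iff_mem.2 ⟨y, evaln_sound (show y ∈ evaln s (cod b) x from hy)⟩

lemma WF_subset_W {b s : ℕ} : (WF b s : Set ℕ) ⊆ W b := fun x hx => mem_W_iff.2 ⟨s, hx⟩

lemma exists_stage_subset {b : ℕ} (F : Finset ℕ) (h : ↑F ⊆ W b) : ∃ s, F ⊆ WF b s := by
  classical
  induction F using Finset.induction with
  | empty => exact ⟨0, by simp⟩
  | @insert x F _ ih =>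
    rename_i hsub
    obtain ⟨s, hs⟩ := ih (fun y hy =>
      h (Finset.mem_coe.2 (Finset.mem_insert_of_mem (Finset.mem_coe.1 hy))))
    obtain ⟨s', hs'⟩ := mem_W_iff.1 (h (Finset.mem_coe.2 (Finset.mem_insert_self _ _)))
    refine ⟨max s s', ?_⟩
    intro y hy
    rcases Finset.mem_insert.1 hy with rfl | hy
    · exact WF_mono (le_max_right _ _) _ hs'
    · exact WF_mono (le_max_left _ _) _ (hs hy)

/-! ### §2 the amalgamation construction -/

/-- `Dst i a π s` : stage-`s` approximation of the chain amalgamation along chain `π`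
with anchor `a` and slack `2*i`. -/
def Dst (i a : ℕ) : List ℕ → ℕ → Finset ℕ
  | [], s => WF a s
  | b :: π, s =>
    Dst i a π s ∪
      (Finset.range (s + 1)).biUnion fun u =>
        if (WF b u \ Dst i a π s).card ≤ 2 * i then WF b u else ∅

lemma Dst_mono {i a : ℕ} : ∀ (π : List ℕ) {s s' : ℕ}, s ≤ s' → Dst i a π s ⊆ Dst i a π s'
  | [], s, s', h => WF_mono h a
  | b :: π, s, s', h => by
    intro x hx
    rcases Finset.mem_union.1 hx with hx | hx
    · exact Finset.mem_union_left _ (Dst_mono π h hx)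
    · obtain ⟨u, hu, hxu⟩ := Finset.mem_biUnion.1 hx
      have hus : u ≤ s := Nat.lt_succ_iff.1 (Finset.mem_range.1 hu)
      by_cases hc : (WF b u \ Dst i a π s).card ≤ 2 * i
      · rw [if_pos hc] at hxu
        have hc' : (WF b u \ Dst i a π s').card ≤ 2 * i := by
          refine le_trans (Finset.card_le_card ?_) hc
          exact Finset.sdiff_subset_sdiff (le_refl _) (Dst_mono π h)
        refine Finset.mem_union_right _ (Finset.mem_biUnion.2 ⟨u, ?_, ?_⟩)
        · exact Finset.mem_range.2 (Nat.lt_succ_of_le (le_trans hus h))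
        · rw [if_pos hc']; exact hxu
      · rw [if_neg hc] at hxu; exact absurd hxu (Finset.notMem_empty x)

/-- the limit set of a chain -/
def Dinf (i a : ℕ) (π : List ℕ) : Set ℕ := ⋃ s, (Dst i a π s : Set ℕ)

/-- The amalgamated hypothesis set for anchor `a` and candidate pool `T`. -/
def VV (i a : ℕ) (T : List ℕ) : Set ℕ :=
  {x | ∃ π : List ℕ, π.Nodup ∧ (∀ b ∈ π, b ∈ T) ∧ x ∈ Dinf i a π}

lemma Dinf_nil {i a : ℕ} : Dinf i a [] = W a := by
  ext x
  simp only [Dinf, Set.mem_iUnion, Dst]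
  exact (mem_W_iff (b := a) (x := x)).symm

lemma Dinf_mono_cons {i a b : ℕ} {π : List ℕ} : Dinf i a π ⊆ Dinf i a (b :: π) := by
  rintro x ⟨s, ⟨⟨s', rfl⟩, hx⟩⟩
  exact ⟨_, ⟨⟨s', rfl⟩, Finset.mem_union_left _ hx⟩⟩

lemma Dst_subset_Dinf {i a s : ℕ} {π : List ℕ} : (Dst i a π s : Set ℕ) ⊆ Dinf i a π :=
  fun x hx => ⟨_, ⟨⟨s, rfl⟩, hx⟩⟩

lemma chunk_bound {i a b : ℕ} {π : List ℕ} :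
    (Dinf i a (b :: π) \ Dinf i a π).Finite ∧ (Dinf i a (b :: π) \ Dinf i a π).ncard ≤ 2 * i := by
  classical
  apply finite_ncard_le
  intro F hF
  rcases F.eq_empty_or_nonempty with rfl | hne
  · simp
  have hcert : ∀ x ∈ F, ∃ u s : ℕ, x ∈ WF b u ∧ (WF b u \ Dst i a π s).card ≤ 2 * i := by
    intro x hxF
    obtain ⟨hx1, hx2⟩ := hF hxF
    obtain ⟨s, ⟨⟨s', rfl⟩, hx⟩⟩ := hx1
    rcases Finset.mem_union.1 hx with hx | hx
    · exact absurd (Dst_subset_Dinf hx) hx2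
    obtain ⟨u, _, hxu⟩ := Finset.mem_biUnion.1 hx
    by_cases hc : (WF b u \ Dst i a π s').card ≤ 2 * i
    · rw [if_pos hc] at hxu; exact ⟨u, s', hxu, hc⟩
    · rw [if_neg hc] at hxu; exact absurd hxu (Finset.notMem_empty x)
  choose! u sf hmem hcond using hcert
  obtain ⟨x₀, hx₀F, hmax⟩ := Finset.exists_max_image F u hne
  have hsub : F ⊆ WF b (u x₀) \ Dst i a π (sf x₀) := by
    intro x hxF
    refine Finset.mem_sdiff.2 ⟨WF_mono (hmax x hxF) b (hmem x hxF), fun hmem' => ?_⟩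
    exact (hF hxF).2 (Dst_subset_Dinf hmem')
  exact le_trans (Finset.card_le_card hsub) (hcond x₀ hx₀F)

lemma Dinf_junk {i a : ℕ} {A : Set ℕ}
    (ha : (W a \ A).Finite ∧ (W a \ A).ncard ≤ i) :
    ∀ π : List ℕ, (Dinf i a π \ A).Finite ∧ (Dinf i a π \ A).ncard ≤ i + 2 * i * π.length := by
  intro π
  induction π with
  | nil => rw [Dinf_nil]; simpa using ha
  | cons b π ih =>
    have hsub : Dinf i a (b :: π) \ A ⊆
        (Dinf i a π \ A) ∪ (Dinf i a (b :: π) \ Dinf i a π) := by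
      intro x hx
      by_cases hxp : x ∈ Dinf i a π
      · exact Or.inl ⟨hxp, hx.2⟩
      · exact Or.inr ⟨hx.1, hxp⟩
    have hfin : ((Dinf i a π \ A) ∪ (Dinf i a (b :: π) \ Dinf i a π)).Finite :=
      ih.1.union chunk_bound.1
    refine ⟨hfin.subset hsub, ?_⟩
    calc (Dinf i a (b :: π) \ A).ncard
        ≤ ((Dinf i a π \ A) ∪ (Dinf i a (b :: π) \ Dinf i a π)).ncard :=
          Set.ncard_le_ncard hsub hfin
      _ ≤ (Dinf i a π \ A).ncard + (Dinf i a (b :: π) \ Dinf i a π).ncard :=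
          Set.ncard_union_le _ _
      _ ≤ (i + 2 * i * π.length) + 2 * i := Nat.add_le_add ih.2 chunk_bound.2
      _ = i + 2 * i * (b :: π).length := by simp [List.length_cons, Nat.mul_add]; ring

lemma W_subset_VV {i a : ℕ} (T : List ℕ) : W a ⊆ VV i a T := by
  intro x hx
  exact ⟨[], List.nodup_nil, by simp, by rwa [Dinf_nil]⟩

lemma A_diff_VV {i a : ℕ} (T : List ℕ) {A : Set ℕ} : A \ VV i a T ⊆ A \ W a :=
  fun x hx => ⟨hx.1, fun hxa => hx.2 (W_subset_VV T hxa)⟩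

/-- enumeration of all nodup chains over `T` -/
def chainsL (T : List ℕ) : List (List ℕ) := T.sublists.flatMap List.permutations

lemma mem_chainsL {T π : List ℕ} (hnd : π.Nodup) (hsub : ∀ b ∈ π, b ∈ T) : π ∈ chainsL T := by
  obtain ⟨l, hlp, hls⟩ := List.subperm_of_subset hnd hsub
  exact List.mem_flatMap.2 ⟨l, List.mem_sublists.2 hls, List.mem_permutations.2 hlp.symm⟩

lemma chainsL_length_le {T π : List ℕ} (h : π ∈ chainsL T) : π.length ≤ T.length := by
  obtain ⟨l, hl, hp⟩ := List.mem_flatMap.1 h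
  rw [(List.mem_permutations.1 hp).length_eq]
  exact (List.mem_sublists.1 hl).length_le

lemma chainsL_count {T : List ℕ} : (chainsL T).length ≤ 2 ^ T.length * T.length.factorial := by
  rw [chainsL, List.length_flatMap]
  have : ∀ x ∈ T.sublists.map (List.length ∘ List.permutations), x ≤ T.length.factorial := by
    intro x hx
    obtain ⟨l, hl, rfl⟩ := List.mem_map.1 hx
    simp only [Function.comp_apply, List.length_permutations]
    exact Nat.factorial_le ((List.mem_sublists.1 hl).length_le)
  calc (T.sublists.map (List.length ∘ List.permutations)).sum
      ≤ (T.sublists.map (List.length ∘ List.permutations)).length • T.length.factorial :=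
        List.sum_le_card_nsmul _ _ this
    _ = 2 ^ T.length * T.length.factorial := by
        simp [List.length_sublists, smul_eq_mul]

lemma VV_junk {i a : ℕ} {T : List ℕ} {A : Set ℕ}
    (ha : (W a \ A).Finite ∧ (W a \ A).ncard ≤ i) :
    (VV i a T \ A).Finite ∧
      (VV i a T \ A).ncard ≤ 2 ^ T.length * T.length.factorial * (i + 2 * i * T.length) := by
  have hsub : VV i a T \ A ⊆ ⋃ π ∈ chainsL T, (Dinf i a π \ A) := by
    rintro x ⟨⟨π, hnd, hπT, hx⟩, hxA⟩
    exact Set.mem_biUnion (mem_chainsL hnd hπT) ⟨hx, hxA⟩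
  have hkey := ncard_listUnion_le (fun π => Dinf i a π \ A) (i + 2 * i * T.length) (chainsL T)
    (fun π hπ => by
      obtain ⟨h1, h2⟩ := Dinf_junk ha π
      exact ⟨h1, le_trans h2 (by
        have := chainsL_length_le hπ
        have : 2 * i * π.length ≤ 2 * i * T.length := Nat.mul_le_mul_left _ this
        omega)⟩)
  refine ⟨hkey.1.subset hsub, ?_⟩
  calc (VV i a T \ A).ncard ≤ (⋃ π ∈ chainsL T, (Dinf i a π \ A)).ncard :=
        Set.ncard_le_ncard hsub hkey.1
    _ ≤ (chainsL T).length * (i + 2 * i * T.length) := hkey.2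
    _ ≤ 2 ^ T.length * T.length.factorial * (i + 2 * i * T.length) :=
        Nat.mul_le_mul_right _ chainsL_count

/-! ### §2b anchor independence -/

lemma WF_subset_Dst {i a s : ℕ} : ∀ π : List ℕ, WF a s ⊆ Dst i a π s
  | [] => Finset.Subset.refl _
  | b :: π => (WF_subset_Dst π).trans Finset.subset_union_left

lemma Dst_suffix {i a s : ℕ} (π₂ : List ℕ) :
    ∀ π₁ : List ℕ, Dst i a π₂ s ⊆ Dst i a (π₁ ++ π₂) s
  | [] => Finset.Subset.refl _
  | b :: π₁ => (Dst_suffix π₂ π₁).trans Finset.subset_union_left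

lemma chunk_admit {i a' b u s' : ℕ} {ρ : List ℕ}
    (hu : u ≤ s') (hc : (WF b u \ Dst i a' ρ s').card ≤ 2 * i) :
    WF b u ⊆ Dst i a' (b :: ρ) s' := by
  intro x hx
  refine Finset.mem_union_right _
    (Finset.mem_biUnion.2 ⟨u, Finset.mem_range.2 (Nat.lt_succ_of_le hu), ?_⟩)
  rw [if_pos hc]; exact hx

lemma chunk_extract {i a b s : ℕ} {ρ : List ℕ} {x : ℕ}
    (hx : x ∈ Dst i a (b :: ρ) s) :
    x ∈ Dst i a ρ s ∨ ∃ u ≤ s, x ∈ WF b u ∧ (WF b u \ Dst i a ρ s).card ≤ 2 * i := by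
  rcases Finset.mem_union.1 hx with hx | hx
  · exact Or.inl hx
  · obtain ⟨u, hu, hxu⟩ := Finset.mem_biUnion.1 hx
    by_cases hc : (WF b u \ Dst i a ρ s).card ≤ 2 * i
    · rw [if_pos hc] at hxu
      exact Or.inr ⟨u, Nat.lt_succ_iff.1 (Finset.mem_range.1 hu), hxu, hc⟩
    · rw [if_neg hc] at hxu; exact absurd hxu (Finset.notMem_empty x)

lemma absorb {i a a' : ℕ}
    (h : (W a \ W a').Finite ∧ (W a \ W a').ncard ≤ 2 * i) (u : ℕ) :
    ∃ s', WF a u ⊆ Dst i a' [a] s' := by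
  classical
  obtain ⟨s₀, hs₀⟩ := exists_stage_subset ((WF a u).filter (fun x => x ∈ W a'))
    (fun x hx => (Finset.mem_filter.1 (Finset.mem_coe.1 hx)).2)
  refine ⟨max u s₀, ?_⟩
  have hcond : (WF a u \ Dst i a' [] (max u s₀)).card ≤ 2 * i := by
    have hsub : ((WF a u \ WF a' (max u s₀) : Finset ℕ) : Set ℕ) ⊆ W a \ W a' := by
      intro x hx
      obtain ⟨hx1, hx2⟩ := Finset.mem_sdiff.1 (Finset.mem_coe.1 hx)
      refine ⟨WF_subset_W (Finset.mem_coe.2 hx1), fun hxa' => ?_⟩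
      exact hx2 (WF_mono (le_max_right u s₀) a'
        (hs₀ (Finset.mem_filter.2 ⟨hx1, hxa'⟩)))
    have h4 := Set.ncard_le_ncard hsub h.1
    rw [Set.ncard_coe_finset] at h4
    simpa [Dst] using le_trans h4 h.2
  exact chunk_admit (le_max_left u s₀) hcond

lemma sim {i a a' : ℕ}
    (h : (W a \ W a').Finite ∧ (W a \ W a').ncard ≤ 2 * i) :
    ∀ (π : List ℕ) (s : ℕ), ∃ s',
      Dst i a π s ⊆ Dst i a' (π.filter (fun b => !(b == a || b == a')) ++ [a]) s' := by
  intro π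
  induction π with
  | nil =>
    intro s
    obtain ⟨s', hs'⟩ := absorb h s
    exact ⟨s', by simpa [Dst] using hs'⟩
  | cons b ρ ih =>
    intro s
    obtain ⟨s₁, hs₁⟩ := ih s
    by_cases hb : b = a ∨ b = a'
    · -- the letter b is redundant on the a' side
      have hfil : (b :: ρ).filter (fun b => !(b == a || b == a')) =
          ρ.filter (fun b => !(b == a || b == a')) := by
        rw [List.filter_cons]
        have : (fun b => !(b == a || b == a')) b = false := by
          rcases hb with rfl | rfl <;> simp
        simp [this]
      obtain ⟨s₂, hs₂⟩ := absorb h s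
      refine ⟨max s₁ (max s₂ s), ?_⟩
      rw [hfil]
      intro x hx
      rcases chunk_extract hx with hx | ⟨u, hu, hxu, _⟩
      · exact Dst_mono _ (le_max_left _ _) (hs₁ hx)
      · rcases hb with rfl | rfl
        · -- b = a : use absorb
          have : x ∈ Dst i a' [b] s₂ := hs₂ (WF_mono (le_trans hu (le_refl s)) b hxu)
          exact Dst_mono _ (le_trans (le_max_left s₂ s) (le_max_right s₁ _))
            (Dst_suffix [b] _ this)
        · -- b = a' : WF a' u is part of the base on the a' side
          have hx' : x ∈ WF b (max s₁ (max s₂ s)) :=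
            WF_mono (le_trans hu (le_trans (le_max_right s₂ s) (le_max_right s₁ _))) b hxu
          exact WF_subset_Dst _ hx'
    · push_neg at hb
      have hfil : (b :: ρ).filter (fun b => !(b == a || b == a')) =
          b :: ρ.filter (fun b => !(b == a || b == a')) := by
        rw [List.filter_cons]
        have : (fun b => !(b == a || b == a')) b = true := by
          simp [hb.1, hb.2]
        simp [this]
      refine ⟨max s₁ s, ?_⟩
      rw [hfil]
      intro x hx
      rcases chunk_extract hx with hx | ⟨u, hu, hxu, hc⟩
      · exact Finset.mem_union_left _ (Dst_mono _ (le_max_left _ _) (hs₁ hx))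
      · have hsub : Dst i a ρ s ⊆
            Dst i a' (ρ.filter (fun b => !(b == a || b == a')) ++ [a]) (max s₁ s) :=
          fun y hy => Dst_mono _ (le_max_left _ _) (hs₁ hy)
        have hc' : (WF b u \
            Dst i a' (ρ.filter (fun b => !(b == a || b == a')) ++ [a]) (max s₁ s)).card
            ≤ 2 * i :=
          le_trans (Finset.card_le_card (Finset.sdiff_subset_sdiff (le_refl _) hsub)) hc
        exact chunk_admit (le_trans hu (le_max_right s₁ s)) hc' hxu

lemma VV_anchor_mono {i a a' : ℕ} {T : List ℕ} (haT : a ∈ T)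
    (h : (W a \ W a').Finite ∧ (W a \ W a').ncard ≤ 2 * i) :
    VV i a T ⊆ VV i a' T := by
  rintro x ⟨π, hnd, hπT, hx⟩
  obtain ⟨s, ⟨⟨s, rfl⟩, hxs⟩⟩ := hx
  obtain ⟨s', hs'⟩ := sim h π s
  refine ⟨π.filter (fun b => !(b == a || b == a')) ++ [a], ?_, ?_, Dst_subset_Dinf (hs' hxs)⟩
  · rw [List.nodup_append]
    refine ⟨hnd.filter _, List.nodup_singleton a, ?_⟩
    intro y hy z hy' hyz
    have := (List.mem_filter.1 hy).2
    rcases List.mem_singleton.1 hy' with rfl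
    subst hyz
    simp at this
  · intro b hbm
    rcases List.mem_append.1 hbm with hbm | hbm
    · exact hπT b (List.mem_of_mem_filter hbm)
    · rcases List.mem_singleton.1 hbm with rfl; exact haT

lemma VV_anchor_eq {i a a' : ℕ} {T : List ℕ} (haT : a ∈ T) (haT' : a' ∈ T)
    (h : (W a \ W a').Finite ∧ (W a \ W a').ncard ≤ 2 * i)
    (h' : (W a' \ W a).Finite ∧ (W a' \ W a).ncard ≤ 2 * i) :
    VV i a T = VV i a' T :=
  Set.Subset.antisymm (VV_anchor_mono haT h) (VV_anchor_mono haT' h')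

/-! ### §3 boolean implementation -/

def wfB (b u x : ℕ) : Bool := decide (x < u) && (evaln u (cod b) x).isSome

lemma wfB_iff {b u x : ℕ} : wfB b u x = true ↔ x ∈ WF b u := by
  rw [mem_WF]
  simp [wfB]

def cntB (p : ℕ → Bool) (l : List ℕ) : ℕ := l.foldr (fun y n => bif p y then n + 1 else n) 0

lemma cntB_eq_countP (p : ℕ → Bool) (l : List ℕ) : cntB p l = l.countP p := by
  induction l with
  | nil => rfl
  | cons y l ih =>
    rw [List.countP_cons]
    cases hy : p y <;> simp [cntB, List.foldr_cons, hy] <;>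
      simp [cntB] at ih <;> omega

lemma cntB_pos {p : ℕ → Bool} {l : List ℕ} : 0 < cntB p l ↔ ∃ y ∈ l, p y = true := by
  rw [cntB_eq_countP, List.countP_pos_iff]

lemma card_filter_eq_cntB (n : ℕ) (p : ℕ → Bool) :
    ((Finset.range n).filter (fun x => p x = true)).card = cntB p (List.range n) := by
  rw [cntB_eq_countP]
  induction n with
  | zero => simp
  | succ n ih =>
    rw [Finset.range_add_one, List.range_succ, Finset.filter_insert, List.countP_append]
    cases hn : p n
    · simpa [hn] using ih
    · rw [if_pos rfl, Finset.card_insert_of_notMem (by simp)]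
      simp [hn, ih]

/-- boolean table computing `Dst i a π s` on `[0, s]` -/
def tab (i a : ℕ) : List ℕ → ℕ → List Bool
  | [], s => (List.range (s + 1)).map fun x => wfB a s x
  | b :: π, s =>
    (List.range (s + 1)).map fun x =>
      (tab i a π s).getD x false ||
        decide (0 < cntB (fun u => wfB b u x &&
            decide (cntB (fun y => wfB b u y && !((tab i a π s).getD y false))
              (List.range u) ≤ 2 * i))
          (List.range (s + 1)))

lemma getD_range_map {f : ℕ → Bool} {n x : ℕ} (h : x < n) :
    ((List.range n).map f).getD x false = f x := by
  rw [List.getD_eq_getElem?_getD]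
  simp [List.getElem?_map, List.getElem?_range h]

lemma getD_range_map_ge {f : ℕ → Bool} {n x : ℕ} (h : n ≤ x) :
    ((List.range n).map f).getD x false = false := by
  rw [List.getD_eq_getElem?_getD, List.getElem?_eq_none]
  · rfl
  · simpa using h

lemma Dst_lt {i a : ℕ} : ∀ {π : List ℕ} {s x : ℕ}, x ∈ Dst i a π s → x < s
  | [], s, x, h => (mem_WF.1 h).1
  | b :: π, s, x, h => by
    rcases chunk_extract h with h | ⟨u, hu, hxu, _⟩
    · exact Dst_lt h
    · exact lt_of_lt_of_le (mem_WF.1 hxu).1 hu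

lemma cnt_sdiff {i a b u s : ℕ} {π : List ℕ}
    (ih : ∀ y, ((tab i a π s).getD y false = true) ↔ y ∈ Dst i a π s) :
    cntB (fun y => wfB b u y && !((tab i a π s).getD y false)) (List.range u)
      = (WF b u \ Dst i a π s).card := by
  rw [← card_filter_eq_cntB]
  congr 1
  ext y
  constructor
  · intro hy
    obtain ⟨-, h2⟩ := Finset.mem_filter.1 hy
    rw [Bool.and_eq_true] at h2
    refine Finset.mem_sdiff.2 ⟨wfB_iff.1 h2.1, fun hc => ?_⟩
    have := h2.2
    rw [(ih y).2 hc] at this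
    simp at this
  · intro hy
    obtain ⟨h1, h2⟩ := Finset.mem_sdiff.1 hy
    refine Finset.mem_filter.2 ⟨Finset.mem_range.2 (mem_WF.1 h1).1, ?_⟩
    have ht : (tab i a π s).getD y false = false := by
      cases hc : (tab i a π s).getD y false
      · rfl
      · exact absurd ((ih y).1 hc) h2
    rw [Bool.and_eq_true]
    exact ⟨wfB_iff.2 h1, by rw [ht]; rfl⟩

lemma tab_getD {i a : ℕ} : ∀ (π : List ℕ) (s x : ℕ),
    ((tab i a π s).getD x false = true) ↔ x ∈ Dst i a π s := by
  intro π
  induction π with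
  | nil =>
    intro s x
    by_cases h : x < s + 1
    · rw [tab, getD_range_map h, wfB_iff]
      exact Iff.rfl
    · rw [tab, getD_range_map_ge (by omega)]
      exact iff_of_false (by simp) (fun hc => h (by have := Dst_lt (i := i) (a := a) hc; omega))
  | cons b π ih =>
    intro s x
    by_cases h : x < s + 1
    · rw [tab, getD_range_map h]
      simp only [Bool.or_eq_true, decide_eq_true_eq]
      constructor
      · rintro (h1 | h1)
        · exact Finset.mem_union_left _ ((ih s x).1 h1)
        · obtain ⟨u, hu, hpu⟩ := cntB_pos.1 h1
          rw [Bool.and_eq_true, decide_eq_true_eq] at hpu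
          obtain ⟨hw, hcnt⟩ := hpu
          rw [cnt_sdiff (fun y => ih s y)] at hcnt
          refine Finset.mem_union_right _
            (Finset.mem_biUnion.2 ⟨u, Finset.mem_range.2 (List.mem_range.1 hu), ?_⟩)
          rw [if_pos hcnt]
          exact wfB_iff.1 hw
      · intro hx
        rcases chunk_extract hx with hx | ⟨u, hu, hxu, hc⟩
        · exact Or.inl ((ih s x).2 hx)
        · refine Or.inr (cntB_pos.2 ⟨u, List.mem_range.2 (by omega), ?_⟩)
          rw [Bool.and_eq_true, decide_eq_true_eq]
          exact ⟨wfB_iff.2 hxu, by rw [cnt_sdiff (fun y => ih s y)]; exact hc⟩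
    · rw [tab, getD_range_map_ge (by omega)]
      exact iff_of_false (by simp)
        (fun hc => h (by have := Dst_lt (i := i) (a := a) hc; omega))

/-- membership checks -/
def elemB (b : ℕ) (l : List ℕ) : Bool := l.foldr (fun y acc => y == b || acc) false

lemma elemB_iff {b : ℕ} {l : List ℕ} : elemB b l = true ↔ b ∈ l := by
  induction l with
  | nil => simp [elemB]
  | cons y l ih =>
    simp only [elemB, List.foldr_cons, Bool.or_eq_true, beq_iff_eq, List.mem_cons]
    rw [← elemB] at *
    constructor
    · rintro (rfl | h)
      · exact Or.inl rfl
      · exact Or.inr (ih.1 h)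
    · rintro (rfl | h)
      · exact Or.inl rfl
      · exact Or.inr (ih.2 h)

def ndB : List ℕ → Bool
  | [] => true
  | b :: π => !(elemB b π) && ndB π

lemma ndB_iff {π : List ℕ} : ndB π = true ↔ π.Nodup := by
  induction π with
  | nil => simp [ndB]
  | cons b π ih =>
    rw [List.nodup_cons, ndB, Bool.and_eq_true, Bool.not_eq_true']
    constructor
    · rintro ⟨h1, h2⟩
      refine ⟨fun hc => ?_, ih.1 h2⟩
      rw [elemB_iff.2 hc] at h1; exact absurd h1 (by simp)
    · rintro ⟨h1, h2⟩
      refine ⟨?_, ih.2 h2⟩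
      rw [← Bool.not_eq_true]
      intro hc
      exact h1 (elemB_iff.1 hc)

def subB (π T : List ℕ) : Bool := π.foldr (fun y acc => elemB y T && acc) true

lemma subB_iff {π T : List ℕ} : subB π T = true ↔ ∀ b ∈ π, b ∈ T := by
  induction π with
  | nil => simp [subB]
  | cons b π ih =>
    simp only [subB, List.foldr_cons, Bool.and_eq_true, List.mem_cons]
    rw [← subB] at *
    constructor
    · rintro ⟨h1, h2⟩ y (rfl | hy)
      · exact elemB_iff.1 h1
      · exact ih.1 h2 y hy
    · intro h
      exact ⟨elemB_iff.2 (h b (Or.inl rfl)), ih.2 (fun y hy => h y (Or.inr hy))⟩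

/-- certificate checker : `n` codes a pair (chain, stage) -/
def chkCert (i a : ℕ) (T : List ℕ) (x n : ℕ) : Bool :=
  ndB (Denumerable.ofNat (List ℕ) n.unpair.1) &&
    subB (Denumerable.ofNat (List ℕ) n.unpair.1) T &&
    (tab i a (Denumerable.ofNat (List ℕ) n.unpair.1) n.unpair.2).getD x false

lemma chkCert_iff {i a x : ℕ} {T : List ℕ} :
    (∃ n, chkCert i a T x n = true) ↔ x ∈ VV i a T := by
  constructor
  · rintro ⟨n, hn⟩
    rw [chkCert, Bool.and_eq_true, Bool.and_eq_true] at hn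
    obtain ⟨⟨h1, h2⟩, h3⟩ := hn
    exact ⟨_, ndB_iff.1 h1, subB_iff.1 h2, Dst_subset_Dinf ((tab_getD _ _ _).1 h3)⟩
  · rintro ⟨π, hnd, hsub, hx⟩
    obtain ⟨s, ⟨⟨s, rfl⟩, hxs⟩⟩ := hx
    refine ⟨Nat.pair (Encodable.encode π) s, ?_⟩
    rw [chkCert, Nat.unpair_pair]
    simp only [Denumerable.ofNat_encode]
    rw [Bool.and_eq_true, Bool.and_eq_true]
    exact ⟨⟨ndB_iff.2 hnd, subB_iff.2 hsub⟩, (tab_getD _ _ _).2 hxs⟩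

/-! ### §3b primitive recursiveness of the pieces -/

section PrimStuff

lemma cod_prim : Primrec cod := Primrec.ofNat _

lemma wfB_prim : Primrec fun p : (ℕ × ℕ) × ℕ => wfB p.1.1 p.1.2 p.2 := by
  have h1 : Primrec fun p : (ℕ × ℕ) × ℕ =>
      (Nat.Partrec.Code.evaln p.1.2 (cod p.1.1) p.2).isSome :=
    Primrec.option_isSome.comp
      (Nat.Partrec.Code.primrec_evaln.comp <|
        (((Primrec.snd.comp Primrec.fst).pair
          (cod_prim.comp (Primrec.fst.comp Primrec.fst))).pair Primrec.snd))
  have h2 : Primrec fun p : (ℕ × ℕ) × ℕ => decide (p.2 < p.1.2) :=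
    PrimrecPred.decide <| Primrec.nat_lt.comp Primrec.snd (Primrec.snd.comp Primrec.fst)
  exact (Primrec.and.comp h2 h1).of_eq fun p => rfl

/-- inner count used by `tab` -/
def q1 (b u : ℕ) (t : List Bool) : ℕ :=
  cntB (fun y => wfB b u y && !(t.getD y false)) (List.range u)

lemma q1_prim : Primrec fun p : (ℕ × ℕ) × List Bool => q1 p.1.1 p.1.2 p.2 := by
  have hb : Primrec fun r : ((ℕ × ℕ) × List Bool) × ℕ × ℕ =>
      wfB r.1.1.1 r.1.1.2 r.2.1 && !(r.1.2.getD r.2.1 false) :=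
    Primrec.and.comp
      (wfB_prim.comp (((Primrec.fst.comp (Primrec.fst.comp Primrec.fst)).pair
        (Primrec.snd.comp (Primrec.fst.comp Primrec.fst))).pair (Primrec.fst.comp Primrec.snd)))
      (Primrec.not.comp ((Primrec.list_getD false).comp (Primrec.snd.comp Primrec.fst)
        (Primrec.fst.comp Primrec.snd)))
  have hh : Primrec₂ fun (p : (ℕ × ℕ) × List Bool) (q : ℕ × ℕ) =>
      bif wfB p.1.1 p.1.2 q.1 && !(p.2.getD q.1 false) then q.2 + 1 else q.2 :=
    Primrec.cond hb (Primrec.succ.comp (Primrec.snd.comp Primrec.snd))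
      (Primrec.snd.comp Primrec.snd)
  exact (Primrec.list_foldr (Primrec.list_range.comp (Primrec.snd.comp Primrec.fst))
    (Primrec.const 0) hh).of_eq fun p => rfl

variable (i : ℕ)

/-- middle count used by `tab` -/
def q2 (i b x s : ℕ) (t : List Bool) : ℕ :=
  cntB (fun u => wfB b u x && decide (q1 b u t ≤ 2 * i)) (List.range (s + 1))

set_option maxHeartbeats 1000000 in
lemma q2_prim : Primrec fun p : (ℕ × ℕ) × ℕ × List Bool =>
    q2 i p.1.1 p.1.2 p.2.1 p.2.2 := by
  have hb : Primrec fun r : ((ℕ × ℕ) × ℕ × List Bool) × ℕ × ℕ =>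
      wfB r.1.1.1 r.2.1 r.1.1.2 && decide (q1 r.1.1.1 r.2.1 r.1.2.2 ≤ 2 * i) :=
    Primrec.and.comp
      (wfB_prim.comp (((Primrec.fst.comp (Primrec.fst.comp Primrec.fst)).pair
        (Primrec.fst.comp Primrec.snd)).pair
        (Primrec.snd.comp (Primrec.fst.comp Primrec.fst))))
      (PrimrecPred.decide <| Primrec.nat_le.comp
        (q1_prim.comp (((Primrec.fst.comp (Primrec.fst.comp Primrec.fst)).pair
          (Primrec.fst.comp Primrec.snd)).pair
          (Primrec.snd.comp (Primrec.snd.comp Primrec.fst))))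
        (Primrec.const (2 * i)))
  have hh : Primrec fun r : ((ℕ × ℕ) × ℕ × List Bool) × ℕ × ℕ =>
      bif wfB r.1.1.1 r.2.1 r.1.1.2 && decide (q1 r.1.1.1 r.2.1 r.1.2.2 ≤ 2 * i)
        then r.2.2 + 1 else r.2.2 :=
    Primrec.cond hb (Primrec.succ.comp (Primrec.snd.comp Primrec.snd))
      (Primrec.snd.comp Primrec.snd)
  exact (Primrec.list_foldr
    (Primrec.list_range.comp (Primrec.succ.comp (Primrec.fst.comp Primrec.snd)))
    (Primrec.const 0) hh.to₂).of_eq fun p => rfl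

lemma tab_eq_q : ∀ (a s b : ℕ) (π : List ℕ),
    tab i a (b :: π) s = (List.range (s + 1)).map fun x =>
      (tab i a π s).getD x false || decide (0 < q2 i b x s (tab i a π s)) := fun _ _ _ _ => rfl

set_option maxHeartbeats 1000000 in
lemma tab_prim : Primrec fun p : (ℕ × ℕ) × List ℕ => tab i p.1.1 p.2 p.1.2 := by
  have hg : Primrec fun p : (ℕ × ℕ) × List ℕ =>
      (List.range (p.1.2 + 1)).map fun x => wfB p.1.1 p.1.2 x := by
    apply Primrec.list_map
      (Primrec.list_range.comp (Primrec.succ.comp (Primrec.snd.comp Primrec.fst)))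
    exact (wfB_prim.comp (((Primrec.fst.comp (Primrec.fst.comp Primrec.fst)).pair
      (Primrec.snd.comp (Primrec.fst.comp Primrec.fst))).pair Primrec.snd)).to₂
  have hh : Primrec₂ fun (p : (ℕ × ℕ) × List ℕ) (q : ℕ × List ℕ × List Bool) =>
      (List.range (p.1.2 + 1)).map fun x =>
        q.2.2.getD x false || decide (0 < q2 i q.1 x p.1.2 q.2.2) := by
    apply Primrec.list_map
      (Primrec.list_range.comp (Primrec.succ.comp
        (Primrec.snd.comp (Primrec.fst.comp Primrec.fst))))
    have hgetD : Primrec fun r : (((ℕ × ℕ) × List ℕ) × ℕ × List ℕ × List Bool) × ℕ =>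
        (r.1.2.2.2.getD r.2 false) :=
      (Primrec.list_getD false).comp
        (Primrec.snd.comp (Primrec.snd.comp (Primrec.snd.comp Primrec.fst))) Primrec.snd
    have hq2 : Primrec fun r : (((ℕ × ℕ) × List ℕ) × ℕ × List ℕ × List Bool) × ℕ =>
        decide (0 < q2 i r.1.2.1 r.2 r.1.1.1.2 r.1.2.2.2) :=
      PrimrecPred.decide <| Primrec.nat_lt.comp (Primrec.const 0)
        ((q2_prim i).comp
          (((Primrec.fst.comp (Primrec.snd.comp Primrec.fst)).pair Primrec.snd).pair
            ((Primrec.snd.comp (Primrec.fst.comp (Primrec.fst.comp Primrec.fst))).pair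
              (Primrec.snd.comp (Primrec.snd.comp (Primrec.snd.comp Primrec.fst))))))
    exact (Primrec.or.comp hgetD hq2).to₂
  have := Primrec.list_rec (Primrec.snd :
      Primrec fun p : (ℕ × ℕ) × List ℕ => p.2) hg hh
  refine this.of_eq fun p => ?_
  obtain ⟨⟨a, s⟩, π⟩ := p
  induction π with
  | nil => rfl
  | cons b π ih =>
    simp only [List.rec] at ih ⊢
    rw [ih, tab_eq_q]

end PrimStuff

/-! ### §3c the hypothesis-index function -/

lemma elemB_prim : Primrec₂ elemB := by
  have hh : Primrec fun r : (ℕ × List ℕ) × ℕ × Bool => (r.2.1 == r.1.1) || r.2.2 :=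
    Primrec.or.comp (Primrec.beq.comp (Primrec.fst.comp Primrec.snd)
      (Primrec.fst.comp Primrec.fst)) (Primrec.snd.comp Primrec.snd)
  exact (Primrec.list_foldr (Primrec.snd : Primrec fun p : ℕ × List ℕ => p.2)
    (Primrec.const false) hh.to₂).of_eq fun p => rfl

lemma ndB_prim : Primrec ndB := by
  have hh : Primrec fun r : List ℕ × ℕ × List ℕ × Bool =>
      !(elemB r.2.1 r.2.2.1) && r.2.2.2 :=
    Primrec.and.comp (Primrec.not.comp (elemB_prim.comp (Primrec.fst.comp Primrec.snd)
      (Primrec.fst.comp (Primrec.snd.comp Primrec.snd))))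
      (Primrec.snd.comp (Primrec.snd.comp Primrec.snd))
  have := Primrec.list_rec (Primrec.id : Primrec fun l : List ℕ => l)
    (Primrec.const true) hh.to₂
  refine this.of_eq fun l => ?_
  simp only [id_eq]
  induction l with
  | nil => rfl
  | cons b π ih => exact congrArg (fun z => !elemB b π && z) ih

lemma subB_prim : Primrec₂ subB := by
  have hh : Primrec fun r : (List ℕ × List ℕ) × ℕ × Bool =>
      elemB r.2.1 r.1.2 && r.2.2 :=
    Primrec.and.comp (elemB_prim.comp (Primrec.fst.comp Primrec.snd)
      (Primrec.snd.comp Primrec.fst)) (Primrec.snd.comp Primrec.snd)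
  exact (Primrec.list_foldr (Primrec.fst : Primrec fun p : List ℕ × List ℕ => p.1)
    (Primrec.const true) hh.to₂).of_eq fun p => rfl

lemma unpair1_prim : Primrec fun n : ℕ => n.unpair.1 :=
  Primrec.fst.comp Primrec.unpair

lemma unpair2_prim : Primrec fun n : ℕ => n.unpair.2 :=
  Primrec.snd.comp Primrec.unpair

set_option maxHeartbeats 1000000 in
lemma chkCert_prim (i : ℕ) :
    Primrec fun p : ((ℕ × List ℕ) × ℕ) × ℕ => chkCert i p.1.1.1 p.1.1.2 p.1.2 p.2 := by
  have hdec : Primrec fun p : ((ℕ × List ℕ) × ℕ) × ℕ =>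
      (Denumerable.ofNat (List ℕ) p.2.unpair.1) :=
    (Primrec.ofNat (List ℕ)).comp (unpair1_prim.comp Primrec.snd)
  have hnd : Primrec fun p : ((ℕ × List ℕ) × ℕ) × ℕ =>
      ndB (Denumerable.ofNat (List ℕ) p.2.unpair.1) := ndB_prim.comp hdec
  have hsub : Primrec fun p : ((ℕ × List ℕ) × ℕ) × ℕ =>
      subB (Denumerable.ofNat (List ℕ) p.2.unpair.1) p.1.1.2 :=
    subB_prim.comp hdec (Primrec.snd.comp (Primrec.fst.comp Primrec.fst))
  have htab : Primrec fun p : ((ℕ × List ℕ) × ℕ) × ℕ =>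
      (tab i p.1.1.1 (Denumerable.ofNat (List ℕ) p.2.unpair.1) p.2.unpair.2).getD p.1.2 false :=
    (Primrec.list_getD false).comp
      ((tab_prim i).comp
        (((Primrec.fst.comp (Primrec.fst.comp Primrec.fst)).pair
          (unpair2_prim.comp Primrec.snd)).pair hdec))
      (Primrec.snd.comp Primrec.fst)
  exact (Primrec.and.comp (Primrec.and.comp hnd hsub) htab).of_eq fun p => rfl

lemma exists_good_code (i : ℕ) : ∃ c : Nat.Partrec.Code,
    ∀ (p : ℕ × List ℕ) (x : ℕ),
      ((Nat.Partrec.Code.curry c (Encodable.encode p)).eval x).Dom ↔ x ∈ VV i p.1 p.2 := by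
  have hchk : Computable₂ fun (q : (ℕ × List ℕ) × ℕ) (n : ℕ) =>
      chkCert i q.1.1 q.1.2 q.2 n :=
    ((chkCert_prim i).to_comp).to₂
  have hpart : Partrec fun q : (ℕ × List ℕ) × ℕ =>
      Nat.rfind fun n => (Part.some (chkCert i q.1.1 q.1.2 q.2 n) : Part Bool) :=
    Partrec.rfind hchk.partrec₂
  have hg : Computable fun m : ℕ =>
      ((Denumerable.ofNat (ℕ × List ℕ) m.unpair.1, m.unpair.2) : (ℕ × List ℕ) × ℕ) :=
    (((Primrec.ofNat (ℕ × List ℕ)).comp unpair1_prim).pair unpair2_prim).to_comp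
  have hUN : Partrec fun m : ℕ =>
      Nat.rfind fun n =>
        (Part.some (chkCert i (Denumerable.ofNat (ℕ × List ℕ) m.unpair.1).1
          (Denumerable.ofNat (ℕ × List ℕ) m.unpair.1).2 m.unpair.2 n) : Part Bool) :=
    (hpart.comp hg).of_eq fun m => rfl
  obtain ⟨c, hc⟩ := Nat.Partrec.Code.exists_code.1 (Partrec.nat_iff.1 hUN)
  refine ⟨c, fun p x => ?_⟩
  rw [Nat.Partrec.Code.eval_curry, hc]
  simp only [Nat.unpair_pair, Denumerable.ofNat_encode]
  rw [← chkCert_iff (i := i) (a := p.1) (T := p.2) (x := x)]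
  constructor
  · intro h
    obtain ⟨n, hn, -⟩ := Nat.rfind_dom.1 h
    exact ⟨n, (Part.mem_some_iff.1 hn).symm⟩
  · rintro ⟨n, hn⟩
    exact Nat.rfind_dom.2 ⟨n, Part.mem_some_iff.2 hn.symm, fun {m} _ => trivial⟩

lemma W_encode_curry {i : ℕ} {c : Nat.Partrec.Code}
    (hc : ∀ (p : ℕ × List ℕ) (x : ℕ),
      ((Nat.Partrec.Code.curry c (Encodable.encode p)).eval x).Dom ↔ x ∈ VV i p.1 p.2)
    (p : ℕ × List ℕ) :
    W (Encodable.encode (Nat.Partrec.Code.curry c (Encodable.encode p))) = VV i p.1 p.2 := by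
  ext x
  have : (Denumerable.ofNat Nat.Partrec.Code
      (Encodable.encode (Nat.Partrec.Code.curry c (Encodable.encode p)))) =
      Nat.Partrec.Code.curry c (Encodable.encode p) := Denumerable.ofNat_encode _
  rw [W, Set.mem_setOf_eq, this]
  exact hc p x

lemma hIdx_computable (c : Nat.Partrec.Code) :
    Computable fun p : ℕ × List ℕ =>
      Encodable.encode (Nat.Partrec.Code.curry c (Encodable.encode p)) :=
  (Primrec.encode.comp
    (Nat.Partrec.Code.primrec₂_curry.comp (Primrec.const c) Primrec.encode)).to_comp

/-! ### §4 the new learner -/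

lemma computable_list_map {α β σ : Type*} [Primcodable α] [Primcodable β] [Primcodable σ]
    {f : α → List β} {g : α → β → σ} (hf : Computable f) (hg : Computable₂ g) :
    Computable fun a => (f a).map (g a) := by
  have h1 : Computable fun q : α × ℕ × List σ => (f q.1)[q.2.1]? :=
    Computable.list_getElem?.comp (hf.comp Computable.fst) (Computable.fst.comp Computable.snd)
  have hg' : Computable₂ fun (q : α × ℕ × List σ) (b : β) => g q.1 b :=
    hg.comp (Computable.fst.comp Computable.fst) Computable.snd
  have h2 : Computable fun q : α × ℕ × List σ => ((f q.1)[q.2.1]?).map (g q.1) :=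
    Computable.option_map h1 hg'
  have h3 : Computable fun q : α × ℕ × List σ =>
      q.2.2 ++ (((f q.1)[q.2.1]?).map (g q.1)).toList :=
    Computable.list_append.comp (Computable.snd.comp Computable.snd)
      ((Primrec.optionToList.to_comp).comp h2)
  have h := Computable.nat_rec (Computable.list_length.comp hf)
    (Computable.const ([] : List σ)) h3.to₂
  refine h.of_eq fun a => ?_
  have key : ∀ n : ℕ, (Nat.rec ([] : List σ)
      (fun y IH => IH ++ ((f a)[y]?.map (g a)).toList) n : List σ)
      = ((f a).take n).map (g a) := by
    intro n
    induction n with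
    | zero => simp
    | succ n ih =>
      show (Nat.rec ([] : List σ) _ n : List σ) ++ _ = _
      rw [ih, List.take_succ, List.map_append]
      congr 1
      rcases (f a)[n]? with _ | y <;> rfl
  have := key (f a).length
  rw [List.take_length] at this
  exact this

def pref (σ : List ℕ) (m : ℕ) : List ℕ := (List.range m).map fun k => σ.getD k 0

def outs (M : List ℕ → ℕ) (σ : List ℕ) : List ℕ :=
  (List.range (σ.length + 1)).map fun m => M (pref σ m)

def cntOf (l : List ℕ) (b : ℕ) : ℕ := cntB (fun y => y == b) l

def maxOf (l : List ℕ) : ℕ := l.foldr max 0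

def beatsB (l : List ℕ) (b' b : ℕ) : Bool :=
  decide (cntOf l b < cntOf l b') ||
    ((cntOf l b' == cntOf l b) && decide (l.idxOf b' < l.idxOf b))

def selB (j : ℕ) (l : List ℕ) (b : ℕ) : Bool :=
  decide (0 < cntOf l b) &&
    decide (cntB (fun b' => (!(b' == b)) && (decide (0 < cntOf l b') && beatsB l b' b))
      (List.range (maxOf l + 1)) < j)

def Tsel (j : ℕ) (l : List ℕ) : List ℕ := (List.range (maxOf l + 1)).filter (selB j l)

lemma pref_prim : Primrec₂ pref := by
  have : Primrec fun p : (List ℕ × ℕ) × ℕ => p.1.1.getD p.2 0 :=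
    (Primrec.list_getD 0).comp (Primrec.fst.comp Primrec.fst) Primrec.snd
  exact (Primrec.list_map (Primrec.list_range.comp Primrec.snd) this.to₂).to₂

lemma outs_computable {M : List ℕ → ℕ} (hM : Computable M) : Computable (outs M) := by
  have h1 : Computable fun σ : List ℕ => List.range (σ.length + 1) :=
    (Primrec.list_range.comp (Primrec.succ.comp Primrec.list_length)).to_comp
  have h2 : Computable₂ fun (σ : List ℕ) (m : ℕ) => M (pref σ m) :=
    (hM.comp pref_prim.to_comp).to₂
  exact computable_list_map h1 h2

lemma cntOf_prim : Primrec₂ cntOf := by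
  have hh : Primrec fun r : (List ℕ × ℕ) × ℕ × ℕ =>
      bif r.2.1 == r.1.2 then r.2.2 + 1 else r.2.2 :=
    Primrec.cond (Primrec.beq.comp (Primrec.fst.comp Primrec.snd)
        (Primrec.snd.comp Primrec.fst))
      (Primrec.succ.comp (Primrec.snd.comp Primrec.snd)) (Primrec.snd.comp Primrec.snd)
  exact ((Primrec.list_foldr (Primrec.fst : Primrec fun p : List ℕ × ℕ => p.1)
    (Primrec.const 0) hh.to₂).of_eq fun p => rfl).to₂

lemma maxOf_prim : Primrec maxOf := by
  have hh : Primrec fun r : List ℕ × ℕ × ℕ => max r.2.1 r.2.2 :=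
    Primrec.nat_max.comp (Primrec.fst.comp Primrec.snd) (Primrec.snd.comp Primrec.snd)
  exact (Primrec.list_foldr Primrec.id (Primrec.const 0) hh.to₂).of_eq fun l => rfl

lemma beatsB_prim : Primrec fun p : (List ℕ × ℕ) × ℕ => beatsB p.1.1 p.1.2 p.2 := by
  have hl : Primrec fun p : (List ℕ × ℕ) × ℕ => p.1.1 := Primrec.fst.comp Primrec.fst
  have hb' : Primrec fun p : (List ℕ × ℕ) × ℕ => p.1.2 := Primrec.snd.comp Primrec.fst
  have hb : Primrec fun p : (List ℕ × ℕ) × ℕ => p.2 := Primrec.snd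
  have hc1 : Primrec fun p : (List ℕ × ℕ) × ℕ => cntOf p.1.1 p.2 := cntOf_prim.comp hl hb
  have hc2 : Primrec fun p : (List ℕ × ℕ) × ℕ => cntOf p.1.1 p.1.2 := cntOf_prim.comp hl hb'
  have hi1 : Primrec fun p : (List ℕ × ℕ) × ℕ => p.1.1.idxOf p.1.2 :=
    Primrec.list_idxOf.comp hb' hl
  have hi2 : Primrec fun p : (List ℕ × ℕ) × ℕ => p.1.1.idxOf p.2 :=
    Primrec.list_idxOf.comp hb hl
  exact Primrec.or.comp (PrimrecPred.decide <| Primrec.nat_lt.comp hc1 hc2)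
    (Primrec.and.comp (Primrec.beq.comp hc2 hc1) (PrimrecPred.decide <| Primrec.nat_lt.comp hi1 hi2))

lemma selB_prim (j : ℕ) : Primrec₂ (selB j) := by
  have hcnt : Primrec fun p : List ℕ × ℕ =>
      cntB (fun b' => (!(b' == p.2)) && (decide (0 < cntOf p.1 b') && beatsB p.1 b' p.2))
        (List.range (maxOf p.1 + 1)) := by
    have hb : Primrec fun r : (List ℕ × ℕ) × ℕ × ℕ =>
        (!(r.2.1 == r.1.2)) && (decide (0 < cntOf r.1.1 r.2.1) && beatsB r.1.1 r.2.1 r.1.2) :=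
      Primrec.and.comp
        (Primrec.not.comp (Primrec.beq.comp (Primrec.fst.comp Primrec.snd)
          (Primrec.snd.comp Primrec.fst)))
        (Primrec.and.comp
          (PrimrecPred.decide <| Primrec.nat_lt.comp (Primrec.const 0)
            (cntOf_prim.comp (Primrec.fst.comp Primrec.fst) (Primrec.fst.comp Primrec.snd)))
          (beatsB_prim.comp (((Primrec.fst.comp Primrec.fst).pair
            (Primrec.fst.comp Primrec.snd)).pair (Primrec.snd.comp Primrec.fst))))
    have hh : Primrec fun r : (List ℕ × ℕ) × ℕ × ℕ =>
        bif (!(r.2.1 == r.1.2)) && (decide (0 < cntOf r.1.1 r.2.1) && beatsB r.1.1 r.2.1 r.1.2)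
          then r.2.2 + 1 else r.2.2 :=
      Primrec.cond hb (Primrec.succ.comp (Primrec.snd.comp Primrec.snd))
        (Primrec.snd.comp Primrec.snd)
    exact (Primrec.list_foldr
      (Primrec.list_range.comp (Primrec.succ.comp (maxOf_prim.comp Primrec.fst)))
      (Primrec.const 0) hh.to₂).of_eq fun p => rfl
  exact (Primrec.and.comp
    (PrimrecPred.decide <| Primrec.nat_lt.comp (Primrec.const 0) (cntOf_prim.comp Primrec.fst Primrec.snd))
    (PrimrecPred.decide <| Primrec.nat_lt.comp hcnt (Primrec.const j))).to₂

lemma filter_eq_foldr {p : ℕ → Bool} : ∀ l : List ℕ,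
    l.foldr (fun b acc => bif p b then b :: acc else acc) [] = l.filter p := by
  intro l
  induction l with
  | nil => rfl
  | cons b l ih =>
    rw [List.foldr_cons, ih, List.filter_cons]
    cases h : p b <;> simp [h]

lemma Tsel_prim (j : ℕ) : Primrec (Tsel j) := by
  have hh : Primrec fun r : List ℕ × ℕ × List ℕ =>
      bif selB j r.1 r.2.1 then r.2.1 :: r.2.2 else r.2.2 :=
    Primrec.cond ((selB_prim j).comp Primrec.fst (Primrec.fst.comp Primrec.snd))
      (Primrec.list_cons.comp (Primrec.fst.comp Primrec.snd) (Primrec.snd.comp Primrec.snd))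
      (Primrec.snd.comp Primrec.snd)
  have := Primrec.list_foldr
    (Primrec.list_range.comp (Primrec.succ.comp maxOf_prim))
    (Primrec.const ([] : List ℕ)) hh.to₂
  exact this.of_eq fun l => filter_eq_foldr (p := selB j l) (List.range (maxOf l + 1))

/-! ### §5 limit behaviour -/

section Limits

variable (O : ℕ → ℕ)

/-- the list of outputs up to time `n` -/
def Lout (n : ℕ) : List ℕ := (List.range (n + 1)).map O

/-- outputs occurring infinitely often -/
def Finf : Set ℕ := {b | {m | O m = b}.Infinite}

lemma Lout_succ (n : ℕ) : Lout O (n + 1) = Lout O n ++ [O (n + 1)] := by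
  rw [Lout, List.range_succ, List.map_append]; rfl

lemma Lout_prefix {n n' : ℕ} (h : n ≤ n') : ∃ t, Lout O n' = Lout O n ++ t := by
  induction n' with
  | zero => exact ⟨[], by simp [Nat.le_zero.1 h]⟩
  | succ n' ih =>
    rcases Nat.lt_or_ge n (n' + 1) with h' | h'
    · obtain ⟨t, ht⟩ := ih (by omega)
      exact ⟨t ++ [O (n' + 1)], by rw [Lout_succ, ht, List.append_assoc]⟩
    · exact ⟨[], by rw [le_antisymm h h']; simp⟩

lemma mem_Lout {n b : ℕ} : b ∈ Lout O n ↔ ∃ m, m ≤ n ∧ O m = b := by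
  rw [Lout]
  constructor
  · intro hx
    obtain ⟨m, hm, rfl⟩ := List.mem_map.1 hx
    exact ⟨m, Nat.lt_succ_iff.1 (List.mem_range.1 hm), rfl⟩
  · rintro ⟨m, hm, rfl⟩
    exact List.mem_map.2 ⟨m, List.mem_range.2 (Nat.lt_succ_iff.2 hm), rfl⟩

lemma cntB_append (p : ℕ → Bool) (l l' : List ℕ) :
    cntB p (l ++ l') = cntB p l + cntB p l' := by
  simp [cntB_eq_countP, List.countP_append]

lemma cntOf_mono {b n n' : ℕ} (h : n ≤ n') : cntOf (Lout O n) b ≤ cntOf (Lout O n') b := by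
  obtain ⟨t, ht⟩ := Lout_prefix O h
  unfold cntOf
  rw [ht, cntB_append]
  omega

lemma cntOf_Lout_eq (n b : ℕ) :
    cntOf (Lout O n) b = ((Finset.range (n + 1)).filter (fun m => O m == b)).card := by
  rw [cntOf, Lout, cntB_eq_countP, List.countP_map, card_filter_eq_cntB, cntB_eq_countP]
  rfl

lemma cnt_unbounded {b : ℕ} (hb : b ∈ Finf O) (K : ℕ) :
    ∃ N, ∀ n, N ≤ n → K ≤ cntOf (Lout O n) b := by
  obtain ⟨t, hts, htfin, htcard⟩ := hb.exists_subset_ncard_eq K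
  obtain ⟨N, hN⟩ := htfin.bddAbove
  refine ⟨N, fun n hn => ?_⟩
  rw [cntOf_Lout_eq]
  have hsub : htfin.toFinset ⊆ (Finset.range (n + 1)).filter (fun m => O m == b) := by
    intro m hm
    rw [Set.Finite.mem_toFinset] at hm
    refine Finset.mem_filter.2 ⟨Finset.mem_range.2 ?_, ?_⟩
    · have := hN hm; omega
    · exact beq_iff_eq.2 (hts hm)
  calc K = t.ncard := htcard.symm
    _ = htfin.toFinset.card := by rw [← Set.ncard_coe_finset, Set.Finite.coe_toFinset]
    _ ≤ _ := Finset.card_le_card hsub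

lemma cnt_frozen {b : ℕ} (hb : b ∉ Finf O) :
    ∃ N, ∀ n, N ≤ n → cntOf (Lout O n) b = cntOf (Lout O N) b := by
  have hfin : {m | O m = b}.Finite := Set.not_infinite.1 hb
  obtain ⟨N, hN⟩ := hfin.bddAbove
  refine ⟨N, fun n hn => ?_⟩
  induction n with
  | zero => rw [Nat.le_zero.1 hn]
  | succ n ih =>
    rcases Nat.lt_or_ge N (n + 1) with h' | h'
    · have hn' : N ≤ n := by omega
      rw [Lout_succ, cntOf, cntB_append, ← cntOf, ih hn']
      have : (O (n + 1) == b) = false := by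
        rw [beq_eq_false_iff_ne]
        intro hc
        have := hN (show (n+1) ∈ {m | O m = b} from hc)
        omega
      simp [cntB, this]
    · rw [le_antisymm hn h']

lemma le_maxOf {x : ℕ} : ∀ {l : List ℕ}, x ∈ l → x ≤ maxOf l := by
  intro l
  induction l with
  | nil => simp
  | cons y l ih =>
    intro hx
    rcases List.mem_cons.1 hx with rfl | hx
    · exact le_max_left _ _
    · exact le_trans (ih hx) (le_max_right _ _)

lemma maxOf_le {B : ℕ} : ∀ {l : List ℕ}, (∀ x ∈ l, x ≤ B) → maxOf l ≤ B := by
  intro l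
  induction l with
  | nil => intro _; simp [maxOf]
  | cons y l ih =>
    intro h
    have : max y (maxOf l) ≤ B :=
      max_le (h y (by simp)) (ih fun x hx => h x (List.mem_cons_of_mem _ hx))
    exact this

lemma nat_mono_bounded_stab {g : ℕ → ℕ} (mono : ∀ {m n}, m ≤ n → g m ≤ g n) (B : ℕ)
    (hb : ∀ n, g n ≤ B) : ∃ N, ∀ n, N ≤ n → g n = g N := by
  classical
  have hne : ((Finset.range (B + 1)).filter (fun v => ∃ n, g n = v)).Nonempty :=
    ⟨g 0, Finset.mem_filter.2 ⟨Finset.mem_range.2 (by have := hb 0; omega), ⟨0, rfl⟩⟩⟩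
  obtain ⟨v, hv, hvmax⟩ := Finset.exists_max_image _ id hne
  obtain ⟨N, rfl⟩ := (Finset.mem_filter.1 hv).2
  refine ⟨N, fun n hn => le_antisymm ?_ (mono hn)⟩
  have hmem : g n ∈ (Finset.range (B + 1)).filter (fun v => ∃ n', g n' = v) :=
    Finset.mem_filter.2 ⟨Finset.mem_range.2 (by have := hb n; omega), ⟨n, rfl⟩⟩
  simpa using hvmax _ hmem

lemma exists_output_bound (S : Finset ℕ) (hev : ∀ᶠ n in atTop, O n ∈ S) :
    ∃ B, ∀ m, O m ≤ B := by
  obtain ⟨N, hN⟩ := eventually_atTop.1 hev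
  refine ⟨max (S.sup id) (maxOf (Lout O N)), fun m => ?_⟩
  rcases Nat.lt_or_ge N m with h | h
  · exact le_trans (Finset.le_sup (f := id) (hN m (by omega))) (le_max_left _ _)
  · exact le_trans (le_maxOf (mem_Lout O |>.2 ⟨m, h, rfl⟩)) (le_max_right _ _)

lemma maxOf_stab (S : Finset ℕ) (hev : ∀ᶠ n in atTop, O n ∈ S) :
    ∃ N, ∀ n, N ≤ n → maxOf (Lout O n) = maxOf (Lout O N) := by
  obtain ⟨B, hB⟩ := exists_output_bound O S hev
  refine nat_mono_bounded_stab (fun {m n} h => ?_) B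
    (fun n => maxOf_le (fun x hx => by
      obtain ⟨m, _, rfl⟩ := (mem_Lout O).1 hx
      exact hB m))
  obtain ⟨t, ht⟩ := Lout_prefix O h
  rw [ht]
  exact maxOf_le fun x hx => le_maxOf (List.mem_append_left t hx)

lemma Finf_subset (S : Finset ℕ) (hev : ∀ᶠ n in atTop, O n ∈ S) : Finf O ⊆ ↑S := by
  intro b hb
  obtain ⟨N, hN⟩ := eventually_atTop.1 hev
  obtain ⟨m, hm, hmN⟩ := hb.exists_gt N
  rw [← hm]
  exact hN m (le_of_lt hmN)

lemma Finf_nonempty (S : Finset ℕ) (hev : ∀ᶠ n in atTop, O n ∈ S) :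
    ∃ b, b ∈ Finf O := by
  by_contra hc
  push_neg at hc
  obtain ⟨N, hN⟩ := eventually_atTop.1 hev
  have h1 : {m | O m ∈ S}.Infinite := by
    have h2 : {m | O m ∈ S}ᶜ.Finite := by
      apply Set.Finite.subset (Set.finite_Iio N)
      intro m hm
      rw [Set.mem_compl_iff, Set.mem_setOf_eq] at hm
      rcases Nat.lt_or_ge m N with h | h
      · exact h
      · exact absurd (hN m h) hm
    have := Set.Finite.infinite_compl h2
    rwa [compl_compl] at this
  have h3 : {m | O m ∈ S} ⊆ ⋃ b ∈ ↑S, {m | O m = b} := by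
    intro m hm
    exact Set.mem_biUnion hm rfl
  have h4 : (⋃ b ∈ (↑S : Set ℕ), {m | O m = b}).Finite :=
    Set.Finite.biUnion S.finite_toSet (fun b _ => Set.not_infinite.1 (hc b))
  exact h1 (h4.subset h3)

lemma ev_Finf (S : Finset ℕ) (hev : ∀ᶠ n in atTop, O n ∈ S) :
    ∀ᶠ m in atTop, O m ∈ Finf O := by
  obtain ⟨N, hN⟩ := eventually_atTop.1 hev
  have hfin : {m | O m ∉ Finf O}.Finite := by
    have hsub : {m | O m ∉ Finf O} ⊆
        (Set.Iio N) ∪ ⋃ b ∈ (↑S \ Finf O : Set ℕ), {m | O m = b} := by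
      intro m hm
      rw [Set.mem_setOf_eq] at hm
      rcases Nat.lt_or_ge m N with h | h
      · exact Or.inl h
      · exact Or.inr (Set.mem_biUnion (Set.mem_diff_of_mem (hN m h) hm) rfl)
    refine Set.Finite.subset (Set.Finite.union (Set.finite_Iio N) ?_) hsub
    exact Set.Finite.biUnion (S.finite_toSet.subset Set.diff_subset)
      (fun b hb => Set.not_infinite.1 hb.2)
  obtain ⟨N', hN'⟩ := hfin.bddAbove
  rw [eventually_atTop]
  refine ⟨N' + 1, fun m hm => ?_⟩
  by_contra hc
  have := hN' (show m ∈ {m | O m ∉ Finf O} from hc)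
  omega

/-- the beat-count inside `selB` -/
def bcnt (l : List ℕ) (b : ℕ) : ℕ :=
  cntB (fun b' => (!(b' == b)) && (decide (0 < cntOf l b') && beatsB l b' b))
    (List.range (maxOf l + 1))

lemma selB_eq (j : ℕ) (l : List ℕ) (b : ℕ) :
    selB j l b = (decide (0 < cntOf l b) && decide (bcnt l b < j)) := rfl

lemma cntOf_pos {l : List ℕ} {b : ℕ} : 0 < cntOf l b ↔ b ∈ l := by
  rw [cntOf, cntB_eq_countP]
  constructor
  · intro h
    obtain ⟨y, hy, he⟩ := List.countP_pos_iff.1 h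
    rwa [← beq_iff_eq.1 he]
  · intro h
    exact List.countP_pos_iff.2 ⟨b, h, beq_iff_eq.2 rfl⟩

lemma cntB_congr {p q : ℕ → Bool} : ∀ {l : List ℕ}, (∀ x ∈ l, p x = q x) →
    cntB p l = cntB q l := by
  intro l h
  rw [cntB_eq_countP, cntB_eq_countP]
  exact List.countP_congr (fun x hx => by rw [h x hx])

lemma Tsel_nodup (j : ℕ) (l : List ℕ) : (Tsel j l).Nodup :=
  (List.nodup_range).filter _

lemma Tsel_length (j : ℕ) (l : List ℕ) : (Tsel j l).length ≤ j := by
  classical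
  by_contra hlen
  push_neg at hlen
  set V := maxOf l with hV
  set FR := (Finset.range (V + 1)).filter (fun b => selB j l b = true) with hFR
  have hcard : (Tsel j l).length = FR.card := by
    rw [hFR, card_filter_eq_cntB, cntB_eq_countP, Tsel]
    exact (List.countP_eq_length_filter).symm
  have hne : FR.Nonempty := by
    rw [← Finset.card_pos]; omega
  set K : ℕ → ℕ := fun b => cntOf l b * (l.length + 1) + (l.length - l.idxOf b) with hK
  obtain ⟨b0, hb0, hmin⟩ := Finset.exists_min_image FR K hne
  have hmem : ∀ b ∈ FR, b ∈ l ∧ bcnt l b < j := by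
    intro b hb
    have hsel := (Finset.mem_filter.1 hb).2
    rw [selB_eq, Bool.and_eq_true, decide_eq_true_eq, decide_eq_true_eq] at hsel
    exact ⟨cntOf_pos.1 hsel.1, hsel.2⟩
  have hbeats : ∀ b ∈ FR, b ≠ b0 → beatsB l b b0 = true := by
    intro b hb hne'
    have hbl := (hmem b hb).1
    have hb0l := (hmem b0 hb0).1
    have hKle : K b0 ≤ K b := hmin b hb
    have hibl : l.idxOf b < l.length := List.idxOf_lt_length_iff.2 hbl
    have hib0l : l.idxOf b0 < l.length := List.idxOf_lt_length_iff.2 hb0l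
    rcases lt_trichotomy (cntOf l b0) (cntOf l b) with h | h | h
    · rw [beatsB]
      simp [h]
    · have hidx : l.idxOf b < l.idxOf b0 := by
        have hle : l.idxOf b ≤ l.idxOf b0 := by
          rw [hK] at hKle
          simp only at hKle
          have hef : cntOf l b0 * (l.length + 1) = cntOf l b * (l.length + 1) := by rw [h]
          omega
        rcases lt_or_eq_of_le hle with h' | h'
        · exact h'
        · exact absurd ((List.idxOf_inj hbl).1 h') hne'
      rw [beatsB]
      have hbeq : (cntOf l b == cntOf l b0) = true := beq_iff_eq.2 h.symm
      simp [hbeq, hidx]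
    · exfalso
      have hKlt : K b < K b0 := by
        have h1 : K b ≤ cntOf l b * (l.length + 1) + l.length := by
          rw [hK]; simp only []
          exact Nat.add_le_add_left (Nat.sub_le _ _) _
        have h2 : cntOf l b * (l.length + 1) + l.length < (cntOf l b + 1) * (l.length + 1) := by
          ring_nf; omega
        have h3 : (cntOf l b + 1) * (l.length + 1) ≤ cntOf l b0 * (l.length + 1) :=
          Nat.mul_le_mul_right _ (by omega)
        have h4 : cntOf l b0 * (l.length + 1) ≤ K b0 := Nat.le_add_right _ _
        omega
      omega
  have hsub : FR.erase b0 ⊆ (Finset.range (V + 1)).filter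
      (fun b' => ((!(b' == b0)) && (decide (0 < cntOf l b') && beatsB l b' b0)) = true) := by
    intro b hb
    obtain ⟨hne', hbFR⟩ := Finset.mem_erase.1 hb
    refine Finset.mem_filter.2 ⟨(Finset.mem_filter.1 hbFR).1, ?_⟩
    rw [Bool.and_eq_true, Bool.and_eq_true]
    refine ⟨by simpa using hne', ?_, hbeats b hbFR hne'⟩
    rw [decide_eq_true_eq, cntOf_pos]
    exact (hmem b hbFR).1
  have hbc : j ≤ bcnt l b0 := by
    rw [bcnt, ← hV, ← card_filter_eq_cntB]
    calc j ≤ (FR.erase b0).card := by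
          rw [Finset.card_erase_of_mem hb0]; omega
      _ ≤ _ := Finset.card_le_card hsub
  have := (hmem b0 hb0).2
  omega

section Stab

variable (O : ℕ → ℕ)

lemma idx_stab {c m₀ : ℕ} (h : O m₀ = c) :
    ∀ n, m₀ ≤ n → (Lout O n).idxOf c = (Lout O m₀).idxOf c := by
  intro n hn
  obtain ⟨t, ht⟩ := Lout_prefix O hn
  rw [ht, List.idxOf_append_of_mem ((mem_Lout O).2 ⟨m₀, le_refl _, h⟩)]

lemma cnt_bounded {b' : ℕ} (hb' : b' ∉ Finf O) :
    ∃ C, ∀ n, cntOf (Lout O n) b' ≤ C := by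
  obtain ⟨N, hN⟩ := cnt_frozen O hb'
  refine ⟨cntOf (Lout O N) b', fun n => ?_⟩
  rcases le_or_gt n N with h | h
  · exact cntOf_mono O h
  · rw [hN n (le_of_lt h)]

lemma cnt_dominates {b b' : ℕ} (hb : b ∈ Finf O) (hb' : b' ∉ Finf O) :
    ∃ N, ∀ n, N ≤ n → cntOf (Lout O n) b' < cntOf (Lout O n) b := by
  obtain ⟨C, hC⟩ := cnt_bounded O hb'
  obtain ⟨N, hN⟩ := cnt_unbounded O hb (C + 1)
  exact ⟨N, fun n hn => lt_of_le_of_lt (hC n) (lt_of_lt_of_le (by omega) (hN n hn))⟩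

/-- the `bcnt` predicate for `b'` against `b` at time `n` -/
def bpred (b b' n : ℕ) : Bool :=
  (!(b' == b)) && (decide (0 < cntOf (Lout O n) b') && beatsB (Lout O n) b' b)

lemma bpred_stab_of_junk {b b' : ℕ} (hb : b ∉ Finf O) (hocc : ∃ m, O m = b)
    (hb' : b' ∉ Finf O) :
    ∃ N, ∀ n, N ≤ n → bpred O b b' n = bpred O b b' N := by
  by_cases hocc' : ∃ m, O m = b'
  · obtain ⟨m₀, hm₀⟩ := hocc
    obtain ⟨m₁, hm₁⟩ := hocc'
    obtain ⟨N₁, hN₁⟩ := cnt_frozen O hb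
    obtain ⟨N₂, hN₂⟩ := cnt_frozen O hb'
    refine ⟨m₀ + m₁ + N₁ + N₂, fun n hn => ?_⟩
    have e1 : cntOf (Lout O n) b = cntOf (Lout O (m₀ + m₁ + N₁ + N₂)) b := by
      rw [hN₁ n (by omega), hN₁ (m₀ + m₁ + N₁ + N₂) (by omega)]
    have e2 : cntOf (Lout O n) b' = cntOf (Lout O (m₀ + m₁ + N₁ + N₂)) b' := by
      rw [hN₂ n (by omega), hN₂ (m₀ + m₁ + N₁ + N₂) (by omega)]
    have e3 : (Lout O n).idxOf b = (Lout O (m₀ + m₁ + N₁ + N₂)).idxOf b := by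
      rw [idx_stab O hm₀ n (by omega), idx_stab O hm₀ (m₀ + m₁ + N₁ + N₂) (by omega)]
    have e4 : (Lout O n).idxOf b' = (Lout O (m₀ + m₁ + N₁ + N₂)).idxOf b' := by
      rw [idx_stab O hm₁ n (by omega), idx_stab O hm₁ (m₀ + m₁ + N₁ + N₂) (by omega)]
    rw [bpred, bpred, beatsB, beatsB, e1, e2, e3, e4]
  · push_neg at hocc'
    have hz : ∀ n, cntOf (Lout O n) b' = 0 := by
      intro n
      by_contra hc
      obtain ⟨m, -, hm⟩ := (mem_Lout O).1 (cntOf_pos.1 (Nat.pos_of_ne_zero hc))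
      exact hocc' m hm
    refine ⟨0, fun n hn => ?_⟩
    rw [bpred, bpred, hz, hz]
    simp

lemma bpred_stab_of_inf {b b' : ℕ} (hb : b ∉ Finf O) (hocc : ∃ m, O m = b)
    (hb' : b' ∈ Finf O) :
    ∃ N, ∀ n, N ≤ n → bpred O b b' n = true := by
  obtain ⟨N₀, hN₀⟩ := cnt_dominates O hb' hb
  obtain ⟨N₁, hN₁⟩ := cnt_unbounded O hb' 1
  refine ⟨N₀ + N₁, fun n hn => ?_⟩
  have hlt : cntOf (Lout O n) b < cntOf (Lout O n) b' := hN₀ n (by omega)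
  have hne : b' ≠ b := fun h => hb (h ▸ hb')
  rw [bpred, beatsB]
  simp [hne, hlt]
  omega

lemma bpred_false_of_dom {b b' : ℕ} (hb : b ∈ Finf O) (hb' : b' ∉ Finf O) :
    ∃ N, ∀ n, N ≤ n → bpred O b b' n = false := by
  obtain ⟨N₀, hN₀⟩ := cnt_dominates O hb hb'
  refine ⟨N₀, fun n hn => ?_⟩
  have hlt : cntOf (Lout O n) b' < cntOf (Lout O n) b := hN₀ n hn
  rw [bpred, beatsB]
  have h1 : decide (cntOf (Lout O n) b < cntOf (Lout O n) b') = false := by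
    rw [decide_eq_false_iff_not]; omega
  have h2 : (cntOf (Lout O n) b' == cntOf (Lout O n) b) = false := by
    rw [beq_eq_false_iff_ne]; omega
  rw [h1, h2]
  simp

end Stab

lemma selB_stab (j : ℕ) (S : Finset ℕ) (hev : ∀ᶠ n in atTop, O n ∈ S)
    (hjS : S.card ≤ j) (b : ℕ) :
    ∃ N, (∀ n, N ≤ n → selB j (Lout O n) b = selB j (Lout O N) b) ∧
      (b ∈ Finf O → selB j (Lout O N) b = true) := by
  classical
  obtain ⟨N₀, hmax⟩ := maxOf_stab O S hev
  set V := maxOf (Lout O N₀) with hV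
  by_cases hb : b ∈ Finf O
  · obtain ⟨N₁, hN₁⟩ := cnt_unbounded O hb 1
    have hch : ∀ b' : ℕ, ∃ Nb, b' ∉ Finf O → ∀ n, Nb ≤ n → bpred O b b' n = false := by
      intro b'
      by_cases hb' : b' ∉ Finf O
      · obtain ⟨N, hN⟩ := bpred_false_of_dom O hb hb'
        exact ⟨N, fun _ => hN⟩
      · exact ⟨0, fun h => absurd h hb'⟩
    choose g hg using hch
    set N := N₀ + N₁ + (Finset.range (V + 1)).sup g with hNdef
    have key : ∀ n, N ≤ n → selB j (Lout O n) b = true := by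
      intro n hn
      rw [selB_eq, Bool.and_eq_true, decide_eq_true_eq, decide_eq_true_eq]
      refine ⟨by have := hN₁ n (by omega); omega, ?_⟩
      have hmax' : maxOf (Lout O n) = V := by rw [hmax n (by omega), hV]
      rw [bcnt, hmax']
      set Sinf := S.filter (fun c => c ∈ Finf O) with hSinf
      have hbS : b ∈ Sinf :=
        Finset.mem_filter.2 ⟨Finset.mem_coe.1 (Finf_subset O S hev hb), hb⟩
      have hsub : (Finset.range (V + 1)).filter
          (fun b' => ((!(b' == b)) &&
            (decide (0 < cntOf (Lout O n) b') && beatsB (Lout O n) b' b)) = true)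
            ⊆ Sinf.erase b := by
        intro b' hb'
        have hp := (Finset.mem_filter.1 hb').2
        have hbr := (Finset.mem_filter.1 hb').1
        have hbin : b' ∈ Finf O := by
          by_contra hc
          have hle : g b' ≤ N := le_trans (Finset.le_sup hbr) (by omega)
          have := hg b' hc n (by omega)
          rw [show ((!(b' == b)) &&
            (decide (0 < cntOf (Lout O n) b') && beatsB (Lout O n) b' b)) = bpred O b b' n
            from rfl, this] at hp
          exact absurd hp (by simp)
        have hne : b' ≠ b := by
          intro h
          rw [h] at hp
          simp at hp
        exact Finset.mem_erase.2 ⟨hne,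
          Finset.mem_filter.2 ⟨Finset.mem_coe.1 (Finf_subset O S hev hbin), hbin⟩⟩
      have hb1 : 1 ≤ Sinf.card := Finset.card_pos.2 ⟨b, hbS⟩
      have hb2 : Sinf.card ≤ S.card := Finset.card_filter_le _ _
      calc cntB (fun b' => (!(b' == b)) &&
            (decide (0 < cntOf (Lout O n) b') && beatsB (Lout O n) b' b))
            (List.range (V + 1))
          = ((Finset.range (V + 1)).filter (fun b' => ((!(b' == b)) &&
              (decide (0 < cntOf (Lout O n) b') && beatsB (Lout O n) b' b)) = true)).card :=
            (card_filter_eq_cntB _ _).symm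
        _ ≤ (Sinf.erase b).card := Finset.card_le_card hsub
        _ = Sinf.card - 1 := Finset.card_erase_of_mem hbS
        _ < j := by omega
    exact ⟨N, fun n hn => by rw [key n hn, key N (le_refl N)], fun _ => key N (le_refl N)⟩
  · by_cases hocc : ∃ m, O m = b
    · have hch : ∀ b', ∃ Nb, ∀ n, Nb ≤ n → bpred O b b' n = bpred O b b' Nb := by
        intro b'
        by_cases hb' : b' ∈ Finf O
        · obtain ⟨N, hN⟩ := bpred_stab_of_inf O hb hocc hb'
          exact ⟨N, fun n hn => by rw [hN n hn, hN N (le_refl _)]⟩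
        · exact bpred_stab_of_junk O hb hocc hb'
      choose g hg using hch
      obtain ⟨N₃, hN₃⟩ := cnt_frozen O hb
      set N := N₀ + N₃ + (Finset.range (V + 1)).sup g with hNdef
      refine ⟨N, fun n hn => ?_, fun h => absurd h hb⟩
      rw [selB_eq, selB_eq]
      have e1 : cntOf (Lout O n) b = cntOf (Lout O N) b := by
        rw [hN₃ n (by omega), hN₃ N (by omega)]
      have e2 : bcnt (Lout O n) b = bcnt (Lout O N) b := by
        rw [bcnt, bcnt, hmax n (by omega), hmax N (by omega)]
        apply cntB_congr
        intro b' hb'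
        have hbr : b' ∈ Finset.range (V + 1) :=
          Finset.mem_range.2 (List.mem_range.1 hb')
        have hle : g b' ≤ N := le_trans (Finset.le_sup hbr) (by omega)
        show bpred O b b' n = bpred O b b' N
        rw [hg b' n (by omega), hg b' N (by omega)]
      rw [e1, e2]
    · push_neg at hocc
      have hz : ∀ n, cntOf (Lout O n) b = 0 := by
        intro n
        by_contra hc
        obtain ⟨m, -, hm⟩ := (mem_Lout O).1 (cntOf_pos.1 (Nat.pos_of_ne_zero hc))
        exact hocc m hm
      refine ⟨0, fun n hn => ?_, fun h => absurd h hb⟩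
      rw [selB_eq, selB_eq, hz, hz]
      simp

lemma Tsel_stab (j : ℕ) (S : Finset ℕ) (hev : ∀ᶠ n in atTop, O n ∈ S)
    (hjS : S.card ≤ j) :
    ∃ N, (∀ n, N ≤ n → Tsel j (Lout O n) = Tsel j (Lout O N)) ∧
      ∀ b ∈ Finf O, b ∈ Tsel j (Lout O N) := by
  classical
  obtain ⟨N₀, hmax⟩ := maxOf_stab O S hev
  set V := maxOf (Lout O N₀) with hV
  choose g hg1 hg2 using (selB_stab O j S hev hjS)
  set N := N₀ + (Finset.range (V + 1)).sup g with hNdef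
  have hsel : ∀ b, b < V + 1 → ∀ n, N ≤ n → selB j (Lout O n) b = selB j (Lout O N) b := by
    intro b hbV n hn
    have hle : g b ≤ N := le_trans (Finset.le_sup (Finset.mem_range.2 hbV)) (by omega)
    rw [hg1 b n (by omega), hg1 b N (by omega)]
  refine ⟨N, fun n hn => ?_, fun b hb => ?_⟩
  · rw [Tsel, Tsel, hmax n (by omega), hmax N (by omega)]
    apply List.filter_congr
    intro b hbmem
    exact hsel b (List.mem_range.1 hbmem) n hn
  · have h1 : selB j (Lout O N) b = true := by
      have hle : g b ≤ N := by
        -- b is eventually selected, in particular `b` occurs by time `g b`;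
        -- but we only need `g b ≤ N` when `b < V + 1`.  We get occurrence from hg2.
        have htrue := hg2 b hb
        -- selB true at g b implies b ∈ Lout O (g b), so b ≤ maxOf (Lout O (g b)) = stuff ≤ V?
        -- instead: b ∈ Finf, so b occurs; b ∈ Lout O n for large n; b ≤ maxOf (Lout O n) = V
        obtain ⟨m, hm⟩ : ∃ m, O m = b := by
          obtain ⟨mm, hmm, -⟩ := hb.exists_gt 0
          exact ⟨mm, hmm⟩
        have hbV : b < V + 1 := by
          have hmem : b ∈ Lout O (N₀ + m) := (mem_Lout O).2 ⟨m, by omega, hm⟩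
          have := le_maxOf hmem
          rw [hmax (N₀ + m) (by omega)] at this
          omega
        exact le_trans (Finset.le_sup (Finset.mem_range.2 hbV)) (by omega)
      rw [hg1 b N hle]
      exact hg2 b hb
    have h2 : b ∈ Lout O N := by
      rw [selB_eq, Bool.and_eq_true, decide_eq_true_eq] at h1
      exact cntOf_pos.1 h1.1
    rw [Tsel]
    refine List.mem_filter.2 ⟨List.mem_range.2 ?_, h1⟩
    have := le_maxOf h2
    omega

end Limits

/-! ### §6 final assembly -/

lemma eqWithin_diff₁ {i : ℕ} {X A : Set ℕ} (h : eqWithin i X A) :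
    (X \ A).Finite ∧ (X \ A).ncard ≤ i := by
  have hsub : X \ A ⊆ symmDiff X A := by
    rw [Set.symmDiff_def]
    exact Set.subset_union_left
  exact ⟨h.1.subset hsub, le_trans (Set.ncard_le_ncard hsub h.1) h.2⟩

lemma eqWithin_diff₂ {i : ℕ} {X A : Set ℕ} (h : eqWithin i X A) :
    (A \ X).Finite ∧ (A \ X).ncard ≤ i := by
  have hsub : A \ X ⊆ symmDiff X A := by
    rw [Set.symmDiff_def]
    exact Set.subset_union_right
  exact ⟨h.1.subset hsub, le_trans (Set.ncard_le_ncard hsub h.1) h.2⟩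

lemma good_pair {i a a' : ℕ} {A : Set ℕ} (ha : eqWithin i (W a) A)
    (ha' : eqWithin i (W a') A) :
    (W a \ W a').Finite ∧ (W a \ W a').ncard ≤ 2 * i := by
  have hsub : W a \ W a' ⊆ (W a \ A) ∪ (A \ W a') := by
    intro x hx
    by_cases hxA : x ∈ A
    · exact Or.inr ⟨hxA, hx.2⟩
    · exact Or.inl ⟨hx.1, hxA⟩
  have h1 := eqWithin_diff₁ ha
  have h2 := eqWithin_diff₂ ha'
  refine ⟨(h1.1.union h2.1).subset hsub, ?_⟩
  calc (W a \ W a').ncard ≤ ((W a \ A) ∪ (A \ W a')).ncard :=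
      Set.ncard_le_ncard hsub (h1.1.union h2.1)
    _ ≤ (W a \ A).ncard + (A \ W a').ncard := Set.ncard_union_le _ _
    _ ≤ 2 * i := by omega

lemma VV_accuracy {i j a : ℕ} {T : List ℕ} {A : Set ℕ} (hT : T.length ≤ j)
    (ha : eqWithin i (W a) A) :
    eqWithin ((2 ^ j * j.factorial * (1 + 2 * j) + 2) * i) (VV i a T) A := by
  have haW := eqWithin_diff₁ ha
  obtain ⟨hfin, hcard⟩ := VV_junk (T := T) haW
  have hAV : (A \ VV i a T).Finite ∧ (A \ VV i a T).ncard ≤ i := by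
    have h2 := eqWithin_diff₂ ha
    exact ⟨h2.1.subset (A_diff_VV T), le_trans
      (Set.ncard_le_ncard (A_diff_VV T) h2.1) h2.2⟩
  have hbound : 2 ^ T.length * T.length.factorial * (i + 2 * i * T.length) + i
      ≤ (2 ^ j * j.factorial * (1 + 2 * j) + 2) * i := by
    have h1 : 2 ^ T.length ≤ 2 ^ j := Nat.pow_le_pow_right (by omega) hT
    have h2 : T.length.factorial ≤ j.factorial := Nat.factorial_le hT
    have h3 : i + 2 * i * T.length ≤ i * (1 + 2 * j) := by
      have h4 : 2 * i * T.length ≤ 2 * i * j := Nat.mul_le_mul_left _ hT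
      have h5 : i * (1 + 2 * j) = i + 2 * i * j := by ring
      omega
    calc 2 ^ T.length * T.length.factorial * (i + 2 * i * T.length) + i
        ≤ 2 ^ j * j.factorial * (i * (1 + 2 * j)) + i :=
          Nat.add_le_add_right (Nat.mul_le_mul (Nat.mul_le_mul h1 h2) h3) i
      _ ≤ (2 ^ j * j.factorial * (1 + 2 * j)) * i + 2 * i := by
          have : 2 ^ j * j.factorial * (i * (1 + 2 * j))
              = (2 ^ j * j.factorial * (1 + 2 * j)) * i := by ring
          omega
      _ = (2 ^ j * j.factorial * (1 + 2 * j) + 2) * i := by ring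
  constructor
  · rw [Set.symmDiff_def]
    exact hfin.union hAV.1
  · rw [Set.symmDiff_def]
    calc (VV i a T \ A ∪ A \ VV i a T).ncard
        ≤ (VV i a T \ A).ncard + (A \ VV i a T).ncard := Set.ncard_union_le _ _
      _ ≤ 2 ^ T.length * T.length.factorial * (i + 2 * i * T.length) + i := by
          have h6 := hAV.2
          have h7 := hcard
          omega
      _ ≤ _ := hbound

lemma getD_range_map_nat {f : ℕ → ℕ} {n x : ℕ} (h : x < n) (d : ℕ) :
    ((List.range n).map f).getD x d = f x := by
  rw [List.getD_eq_getElem?_getD]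
  simp [List.getElem?_map, List.getElem?_range h]

lemma pref_seg {f : ℕ → ℕ} {n m : ℕ} (h : m ≤ n) : pref (seg f n) m = seg f m := by
  simp only [pref, seg]
  apply List.map_congr_left
  intro k hk
  have hkm : k < m := List.mem_range.1 hk
  exact getD_range_map_nat (f := f) (by omega) 0

lemma outs_seg (M : List ℕ → ℕ) (f : ℕ → ℕ) (n : ℕ) :
    outs M (seg f n) = Lout (fun m => M (seg f m)) n := by
  rw [outs, Lout]
  have hlen : (seg f n).length = n := by
    simp [seg]
  rw [hlen]
  apply List.map_congr_left
  intro m hm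
  rw [pref_seg (Nat.lt_succ_iff.1 (List.mem_range.1 hm))]

end S4

/-- For every `j ∈ ℕ` there is `c ∈ ℕ`, depending only on `j`, such that
for every `i ∈ ℕ`, TxtFex^i_j ⊆ TxtFext^{c·i}_j. -/
theorem txtFex_subset_txtFext_mul (j : ℕ) :
    ∃ c : ℕ, ∀ i : ℕ, ∀ 𝓕 : Set (Set ℕ), NiceFamily 𝓕 →
      FexLearnable (some i) (some j) 𝓕 → FextLearnable (some (c * i)) (some j) 𝓕 := by
  classical
  refine ⟨2 ^ j * j.factorial * (1 + 2 * j) + 2, ?_⟩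
  intro i 𝓕 _ hFex
  obtain ⟨M, hMcomp, hMlearn⟩ := hFex
  obtain ⟨c₀, hc₀⟩ := S4.exists_good_code i
  set hIdx : ℕ × List ℕ → ℕ := fun p =>
    Encodable.encode (Nat.Partrec.Code.curry c₀ (Encodable.encode p)) with hIdxdef
  refine ⟨fun σ => hIdx (M σ, S4.Tsel j (S4.outs M σ)), ?_, ?_⟩
  · exact (S4.hIdx_computable c₀).comp
      (hMcomp.pair (((S4.Tsel_prim j).to_comp).comp (S4.outs_computable hMcomp)))
  · intro A hA f hf
    obtain ⟨S, hScard, hSev, hSacc⟩ := hMlearn A hA f hf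
    have hScard' : S.card ≤ j := hScard
    set O : ℕ → ℕ := fun m => M (seg f m) with hO
    have hev : ∀ᶠ n in atTop, O n ∈ S := hSev
    obtain ⟨N, hTstab, hTmem⟩ := S4.Tsel_stab O j S hev hScard'
    set T : List ℕ := S4.Tsel j (S4.Lout O N) with hT
    have hWeq : ∀ a : ℕ, W (hIdx (a, T)) = S4.VV i a T := fun a =>
      S4.W_encode_curry hc₀ (a, T)
    have hgood : ∀ a, a ∈ S4.Finf O → eqWithin i (W a) (Set.range f) := by
      intro a ha
      have haS : a ∈ S := Finset.mem_coe.1 (S4.Finf_subset O S hev ha)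
      exact hSacc a haS
    set S' : Finset ℕ := (S.filter (fun a => a ∈ S4.Finf O)).image (fun a => hIdx (a, T))
      with hS'
    refine ⟨S', ?_, ?_, ?_, ?_⟩
    · show S'.card ≤ j
      calc S'.card ≤ (S.filter (fun a => a ∈ S4.Finf O)).card := Finset.card_image_le
        _ ≤ S.card := Finset.card_filter_le _ _
        _ ≤ j := hScard'
    · obtain ⟨N₁, hN₁⟩ := eventually_atTop.1 (S4.ev_Finf O S hev)
      obtain ⟨N₂, hN₂⟩ := eventually_atTop.1 hev
      rw [eventually_atTop]
      refine ⟨N + N₁ + N₂, fun n hn => ?_⟩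
      have h1 : S4.outs M (seg f n) = S4.Lout O n := S4.outs_seg M f n
      have h2 : S4.Tsel j (S4.Lout O n) = T := hTstab n (by omega)
      show hIdx (M (seg f n), S4.Tsel j (S4.outs M (seg f n))) ∈ S'
      rw [h1, h2]
      refine Finset.mem_image.2 ⟨O n, ?_, rfl⟩
      exact Finset.mem_filter.2 ⟨hN₂ n (by omega), hN₁ n (by omega)⟩
    · intro v hv
      obtain ⟨a, ha, rfl⟩ := Finset.mem_image.1 hv
      have haF : a ∈ S4.Finf O := (Finset.mem_filter.1 ha).2
      show eqWithin _ (W (hIdx (a, T))) (Set.range f)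
      rw [hWeq a]
      exact S4.VV_accuracy (S4.Tsel_length j _) (hgood a haF)
    · intro v hv v' hv'
      obtain ⟨a, ha, rfl⟩ := Finset.mem_image.1 hv
      obtain ⟨a', ha', rfl⟩ := Finset.mem_image.1 hv'
      have haF : a ∈ S4.Finf O := (Finset.mem_filter.1 ha).2
      have haF' : a' ∈ S4.Finf O := (Finset.mem_filter.1 ha').2
      rw [hWeq a, hWeq a']
      exact S4.VV_anchor_eq (hTmem a haF) (hTmem a' haF')
        (S4.good_pair (hgood a haF) (hgood a' haF'))
        (S4.good_pair (hgood a' haF') (hgood a haF))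
end

section
/- For every i ∈ ℕ, TxtFex^i_* is strictly contained in TxtFex*_*: there exists a family of nonempty c.e. subsets of ℕ that is TxtFex*₂-learnable (hence TxtFex*_*-learnable) but not TxtFex^i_*-learnable for any i ∈ ℕ. -/
open Filter

section AuxForProof

lemma seg_eq_list (f : ℕ → ℕ) (l : List ℕ)
    (h : ∀ k, (hk : k < l.length) → f k = l[k]) : seg f l.length = l := by
  apply List.ext_getElem (by simp [seg])
  intro k h1 h2
  simpa [seg] using h k h2

lemma W_compl_Ico (a b : ℕ) : ∃ c : ℕ, W c = (Set.Ico a b)ᶜ := by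
  have hp : ComputablePred fun x : ℕ => x ∈ (Set.Ico a b)ᶜ := by
    rw [ComputablePred.computable_iff]
    refine ⟨fun x => decide (x < a ∨ b ≤ x), ?_, ?_⟩
    · exact Primrec.to_comp (PrimrecPred.decide (PrimrecPred.or
        (Primrec.nat_lt.comp .id (.const a))
        (Primrec.nat_le.comp (.const b) .id)))
    · funext x
      simp [Set.mem_Ico, decide_eq_true_eq]
      constructor
      · intro h; omega
      · intro h; omega
  have h1 : REPred fun x : ℕ => x ∈ (Set.Ico a b)ᶜ := hp.to_re
  have h2 : Partrec fun x : ℕ =>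
      (Part.assert (x ∈ (Set.Ico a b)ᶜ) fun _ => Part.some ()).map (fun _ => 0) :=
    h1.map ((Computable.const 0).comp Computable.fst).to₂
  have h3 : Nat.Partrec fun x : ℕ =>
      Part.assert (x ∈ (Set.Ico a b)ᶜ) fun _ => Part.some 0 := by
    apply Partrec.nat_iff.1
    refine h2.of_eq fun x => ?_
    apply Part.ext'
    · simp [Part.assert]
    · intros; rfl
  obtain ⟨c, hc⟩ := Nat.Partrec.Code.exists_code.1 h3
  refine ⟨Encodable.encode c, ?_⟩
  ext x
  simp [W, Denumerable.ofNat_encode, hc, Part.assert, Part.some, Part.Dom]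

lemma mem_le_foldr_max (l : List ℕ) : ∀ x ∈ l, x ≤ l.foldr max 0 := by
  induction l with
  | nil => simp
  | cons a t ih =>
    intro x hx
    rcases List.mem_cons.1 hx with rfl | h
    · exact le_max_left _ _
    · exact (ih x h).trans (le_max_right _ _)

end AuxForProof

/-- There is a family of nonempty c.e. sets that is TxtFex*₂-learnable
(hence TxtFex*_*-learnable) but not TxtFex^i_*-learnable for any `i ∈ ℕ`. -/
theorem txtFexIStar_ssubset_txtFexStarStar :
    ∃ 𝓕 : Set (Set ℕ), NiceFamily 𝓕 ∧
      FexLearnable none (some 2) 𝓕 ∧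
      FexLearnable none none 𝓕 ∧
      ∀ i : ℕ, ¬ FexLearnable (some i) none 𝓕 := by
  classical
  set 𝓕 : Set (Set ℕ) := {A | ∃ a b : ℕ, A = (Set.Ico a b)ᶜ} with h𝓕
  obtain ⟨e, he⟩ := W_compl_Ico 0 0
  have he' : W e = Set.univ := by rw [he]; simp
  have hlearn : ∀ j : Option ℕ, CardOK j {e} → FexLearnable none j 𝓕 := by
    intro j hj
    refine ⟨fun _ => e, Computable.const e, ?_⟩
    rintro A ⟨a, b, rfl⟩ f hf
    refine ⟨{e}, hj, Eventually.of_forall (by simp), ?_⟩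
    intro c hc
    rw [Finset.mem_singleton] at hc
    rw [hc]
    show eqStar (W e) _
    rw [hf, he', eqStar]
    have hsd : symmDiff (Set.univ : Set ℕ) (Set.Ico a b)ᶜ = Set.Ico a b := by
      rw [← Set.top_eq_univ, top_symmDiff, hnot_eq_compl, compl_compl]
    rw [hsd]
    exact Set.finite_Ico a b
  refine ⟨𝓕, ?_, ?_, ?_, ?_⟩
  · rintro A ⟨a, b, rfl⟩
    refine ⟨⟨b, by simp⟩, ?_⟩
    obtain ⟨c, hc⟩ := W_compl_Ico a b
    exact ⟨c, hc.symm⟩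
  · exact hlearn (some 2) (by simp [CardOK])
  · exact hlearn none trivial
  · rintro i ⟨M, hM, hlearns⟩
    have huniv : (Set.univ : Set ℕ) ∈ 𝓕 := ⟨0, 0, by simp⟩
    -- Step 1: locking sequence for Set.univ
    have lock : ∃ s : List ℕ, ∀ t : List ℕ, eqWithin i (W (M (s ++ t))) Set.univ := by
      by_contra hlock
      push_neg at hlock
      choose T hT using hlock
      set σ : ℕ → List ℕ := fun k => Nat.rec [] (fun k ih => ih ++ T ih ++ [k]) k with hσ
      have hσs : ∀ k, σ (k + 1) = σ k ++ T (σ k) ++ [k] := fun k => rfl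
      have hpref : ∀ k, σ k <+: σ (k + 1) := by
        intro k
        rw [hσs k, List.append_assoc]
        exact List.prefix_append _ _
      have hmono : ∀ k m, k ≤ m → σ k <+: σ m := by
        intro k m hkm
        induction m with
        | zero => rw [Nat.le_zero.1 hkm]
        | succ m ih =>
          rcases Nat.lt_or_ge k (m + 1) with h | h
          · exact (ih (Nat.lt_succ_iff.1 h)).trans (hpref m)
          · rw [Nat.le_antisymm hkm h]
      have hlen : ∀ k, k ≤ (σ k).length := by
        intro k
        induction k with
        | zero => simp
        | succ k ih =>
          rw [hσs k]
          simp only [List.length_append, List.length_singleton]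
          omega
      set g : ℕ → ℕ := fun n => (σ (n + 1)).getD n 0 with hgdef
      have hg : ∀ k n, n < (σ k).length → g n = (σ k).getD n 0 := by
        intro k n hn
        rcases le_total (n + 1) k with h | h
        · have hp := hmono (n + 1) k h
          have hn' : n < (σ (n + 1)).length := lt_of_lt_of_le (Nat.lt_succ_self n) (hlen (n + 1))
          show (σ (n + 1)).getD n 0 = _
          rw [List.getD_eq_getElem _ _ hn', List.getD_eq_getElem _ _ hn]
          exact hp.getElem hn'
        · have hp := hmono k (n + 1) h
          have hn' : n < (σ (n + 1)).length := lt_of_lt_of_le hn hp.length_le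
          show (σ (n + 1)).getD n 0 = _
          rw [List.getD_eq_getElem _ _ hn', List.getD_eq_getElem _ _ hn]
          exact (hp.getElem hn).symm
      have hseg : ∀ k (l : List ℕ), l <+: σ k → seg g l.length = l := by
        intro k l hl
        apply seg_eq_list
        intro n hn
        have hn2 : n < (σ k).length := lt_of_lt_of_le hn hl.length_le
        rw [hg k n hn2, List.getD_eq_getElem _ _ hn2]
        exact (hl.getElem hn).symm
      have hrange : Set.range g = Set.univ := by
        ext x
        simp only [Set.mem_univ, iff_true, Set.mem_range]
        have hx : x ∈ σ (x + 1) := by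
          rw [hσs x]
          simp
        obtain ⟨n, hn, hxe⟩ := List.getElem_of_mem hx
        exact ⟨n, by rw [hg (x + 1) n hn, List.getD_eq_getElem _ _ hn, hxe]⟩
      obtain ⟨S, -, hev, hacc⟩ := hlearns Set.univ huniv g hrange
      rw [eventually_atTop] at hev
      obtain ⟨N, hN⟩ := hev
      set l : List ℕ := σ N ++ T (σ N) with hl
      have hlpref : l <+: σ (N + 1) := by
        rw [hσs N]
        exact ⟨[N], rfl⟩
      have hlenl : N ≤ l.length := by
        rw [hl]
        simp only [List.length_append]
        exact le_trans (hlen N) (Nat.le_add_right _ _)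
      have h1 : M (seg g l.length) ∈ S := hN _ hlenl
      rw [hseg (N + 1) l hlpref] at h1
      have h2 := hacc _ h1
      rw [hrange] at h2
      exact hT (σ N) h2
    obtain ⟨s, hs⟩ := lock
    -- Step 2: diagonalize
    set m : ℕ := s.foldr max 0 + 1 with hm
    have hbound : ∀ x ∈ s, x < m := fun x hx => Nat.lt_succ_of_le (mem_le_foldr_max s x hx)
    set A : Set ℕ := (Set.Ico m (m + (2 * i + 1)))ᶜ with hA
    have hA𝓕 : A ∈ 𝓕 := ⟨m, m + (2 * i + 1), rfl⟩
    have hAmem : ∀ x : ℕ, x ∈ A ↔ (x < m ∨ m + (2 * i + 1) ≤ x) := by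
      intro x
      rw [hA]
      simp only [Set.mem_compl_iff, Set.mem_Ico, not_and, not_lt]
      omega
    set h0 : ℕ → ℕ := fun n => if n < m then n else n + (2 * i + 1) with hh0
    set g : ℕ → ℕ := fun n => if n < s.length then s.getD n 0 else h0 (n - s.length) with hg
    have hh0A : ∀ n, h0 n ∈ A := by
      intro n
      rw [hAmem, hh0]
      by_cases hn : n < m
      · simp [hn]
      · simp only [hn, if_false]
        omega
    have hrange : Set.range g = A := by
      ext x
      constructor
      · rintro ⟨n, rfl⟩
        rw [hg]
        by_cases hn : n < s.length
        · simp only [hn, if_true]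
          rw [List.getD_eq_getElem _ _ hn]
          rw [hAmem]
          exact Or.inl (hbound _ (List.getElem_mem hn))
        · simp only [hn, if_false]
          exact hh0A _
      · intro hx
        rw [hAmem] at hx
        rcases hx with hx | hx
        · refine ⟨s.length + x, ?_⟩
          rw [hg]
          simp only [Nat.not_lt.2 (Nat.le_add_right _ _), if_false, Nat.add_sub_cancel_left]
          rw [hh0]
          simp [hx]
        · refine ⟨s.length + (x - (2 * i + 1)), ?_⟩
          rw [hg]
          simp only [Nat.not_lt.2 (Nat.le_add_right _ _), if_false, Nat.add_sub_cancel_left]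
          rw [hh0]
          have h1 : ¬ (x - (2 * i + 1) < m) := by omega
          simp only [h1, if_false]
          omega
    have hseg : ∀ n, s.length ≤ n → ∃ t : List ℕ, seg g n = s ++ t := by
      intro n hn
      obtain ⟨p, rfl⟩ : ∃ p, n = s.length + p := ⟨n - s.length, by omega⟩
      refine ⟨(List.range (s.length + p - s.length)).map h0, ?_⟩
      simp only [Nat.add_sub_cancel_left]
      have hlen : (s ++ (List.range p).map h0).length = s.length + p := by
        simp
      rw [← hlen]
      apply seg_eq_list
      intro k hk
      rw [hlen] at hk
      by_cases hks : k < s.length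
      · rw [List.getElem_append_left hks, hg]
        simp only [hks, if_true]
        rw [List.getD_eq_getElem _ _ hks]
      · have hks' : s.length ≤ k := Nat.not_lt.1 hks
        rw [List.getElem_append_right hks']
        simp only [List.getElem_map, List.getElem_range]
        rw [hg]
        simp only [hks, if_false]
    obtain ⟨S, -, hev, hacc⟩ := hlearns A hA𝓕 g hrange
    rw [eventually_atTop] at hev
    obtain ⟨N, hN⟩ := hev
    set n : ℕ := max N s.length with hn
    obtain ⟨t, ht⟩ := hseg n (le_max_right _ _)
    have h1 : M (seg g n) ∈ S := hN n (le_max_left _ _)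
    have h3 : eqWithin i (W (M (seg g n))) A := by
      have := hacc _ h1
      rwa [hrange] at this
    rw [ht] at h1 h3
    have h2 : eqWithin i (W (M (s ++ t))) Set.univ := hs t
    -- Step 3: contradiction via symmDiff counting
    set Wa : Set ℕ := W (M (s ++ t)) with hWa
    have hsub : symmDiff (Set.univ : Set ℕ) A ⊆ symmDiff Wa Set.univ ∪ symmDiff Wa A := by
      have htri := symmDiff_triangle (Set.univ : Set ℕ) Wa A
      rw [symmDiff_comm Set.univ Wa] at htri
      exact htri
    have hcard1 : (symmDiff (Set.univ : Set ℕ) A).ncard = 2 * i + 1 := by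
      have : symmDiff (Set.univ : Set ℕ) A = Set.Ico m (m + (2 * i + 1)) := by
        rw [hA, ← Set.top_eq_univ, top_symmDiff, hnot_eq_compl, compl_compl]
      rw [this, ← Finset.coe_Ico, Set.ncard_coe_finset, Nat.card_Ico]
      omega
    have hcard2 : (symmDiff (Set.univ : Set ℕ) A).ncard ≤
        (symmDiff Wa Set.univ).ncard + (symmDiff Wa A).ncard := by
      refine le_trans (Set.ncard_le_ncard hsub (h2.1.union h3.1)) ?_
      exact Set.ncard_union_le _ _
    have hle1 : (symmDiff Wa Set.univ).ncard ≤ i := h2.2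
    have hle2 : (symmDiff Wa A).ncard ≤ i := h3.2
    omega
end

section
/- Let M be a learner, let A and B be nonempty c.e. subsets of ℕ whose symmetric difference A △ B is infinite, and let σ be a finite sequence with content(σ) ⊆ A ∩ B. Suppose that W_{M(τ)} = W_{M(σ)} for every finite sequence τ extending σ with content(τ) ⊆ A ∪ B. Then M does not TxtFex*_*-learn the family {A, B} (and in particular does not TxtFext*_*-learn it): for at least one D ∈ {A, B}, M fails to TxtFex*_*-identify every text for D that extends σ. -/
open Filter

/-- If `A △ B` is infinite, `content σ ⊆ A ∩ B`, and `M` outputs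
hypotheses coding the single set `W (M σ)` on all extensions of `σ` with content in
`A ∪ B`, then `M` fails to TxtFex*_*-identify some text extending `σ` for one of `A, B`. -/
theorem learner_fails_on_constant_cone (M : List ℕ → ℕ) (hM : Computable M)
    (A B : Set ℕ) (hA : A.Nonempty) (hB : B.Nonempty)
    (hAce : IsCE A) (hBce : IsCE B)
    (hinf : (symmDiff A B).Infinite)
    (σ : List ℕ) (hσ : content σ ⊆ A ∩ B)
    (hstab : ∀ τ : List ℕ, σ <+: τ → content τ ⊆ A ∪ B → W (M τ) = W (M σ)) :
    ∃ D ∈ ({A, B} : Set (Set ℕ)), ∃ f : ℕ → ℕ,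
      Set.range f = D ∧ seg f σ.length = σ ∧ ¬ FexIdentifies none none M f := by
  -- pick D with infinite symmDiff with W (M σ)
  have key : ∃ D ∈ ({A, B} : Set (Set ℕ)), D.Nonempty ∧ D ⊆ A ∪ B ∧
      content σ ⊆ D ∧ (symmDiff D (W (M σ))).Infinite := by
    by_cases h : (symmDiff A (W (M σ))).Infinite
    · exact ⟨A, Or.inl rfl, hA, Set.subset_union_left,
        fun x hx => (hσ hx).1, h⟩
    · refine ⟨B, Or.inr rfl, hB, Set.subset_union_right,
        fun x hx => (hσ hx).2, fun hfin => ?_⟩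
      rw [Set.not_infinite] at h
      have : (symmDiff A B).Finite := by
        have tri : symmDiff A B ⊆ symmDiff A (W (M σ)) ∪ symmDiff (W (M σ)) B :=
          symmDiff_triangle A (W (M σ)) B
        exact ((h.union (by rwa [symmDiff_comm] at hfin)).subset tri)
      exact hinf this
  obtain ⟨D, hD, hDne, hDsub, hσD, hDinf⟩ := key
  obtain ⟨g, hg⟩ := (Set.to_countable D).exists_eq_range hDne
  set f : ℕ → ℕ := fun n => if h : n < σ.length then σ.get ⟨n, h⟩ else g (n - σ.length) with hf
  have hrange : Set.range f = D := by
    apply Set.Subset.antisymm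
    · rintro x ⟨n, rfl⟩
      by_cases h : n < σ.length
      · simp only [hf, dif_pos h]
        exact hσD (List.get_mem σ ⟨n, h⟩)
      · simp only [hf, dif_neg h]
        rw [hg]; exact Set.mem_range_self _
    · intro x hx
      rw [hg] at hx
      obtain ⟨n, rfl⟩ := hx
      exact ⟨n + σ.length, by simp [hf]⟩
  have hsegσ : seg f σ.length = σ := by
    apply List.ext_get
    · simp [seg]
    · intro i h1 h2
      have hi : i < σ.length := h2
      simp [seg, hf, hi]
  have hpref : ∀ n, σ.length ≤ n → σ <+: seg f n := by
    intro n hn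
    have heq : σ = (seg f n).take σ.length := by
      rw [← hsegσ]
      simp [seg, ← List.map_take, List.take_range, Nat.min_eq_left hn]
    rw [heq]
    exact List.take_prefix _ _
  refine ⟨D, hD, f, hrange, hsegσ, ?_⟩
  rintro ⟨S, -, hev, hacc⟩
  obtain ⟨N, hN⟩ := Filter.eventually_atTop.mp hev
  set n := max N σ.length
  have ha : M (seg f n) ∈ S := hN n (le_max_left _ _)
  have hco : content (seg f n) ⊆ A ∪ B := by
    intro x hx
    apply hDsub
    rw [← hrange]
    simp only [content, seg, List.mem_map, List.mem_range, Set.mem_setOf_eq] at hx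
    obtain ⟨k, -, rfl⟩ := hx
    exact Set.mem_range_self _
  have hW : W (M (seg f n)) = W (M σ) := hstab _ (hpref n (le_max_right _ _)) hco
  have := hacc _ ha
  simp only [Accurate, eqStar, hW, hrange] at this
  rw [symmDiff_comm] at this
  exact hDinf this
end

section
/- Let L be an infinite c.e. subset of ℕ and let M be a learner that TxtFext*_*-identifies every text for L. Then there exists a finite sequence σ with content(σ) ⊆ L such that for all finite sequences τ₁, τ₂ extending σ with content(τ₁) ⊆ L and content(τ₂) ⊆ L, we have W_{M(τ₁)} = W_{M(τ₂)}. -/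
open Filter

/-- If `M` TxtFext*_*-identifies every text for an infinite c.e. set `L`,
then there is a finite sequence `σ` with content in `L` on all of whose extensions
(with content in `L`) `M` outputs hypotheses coding one and the same set. -/
theorem exists_stabilizing_sequence (L : Set ℕ) (hLce : IsCE L) (hLinf : L.Infinite)
    (M : List ℕ → ℕ) (hM : Computable M)
    (hlearn : ∀ f : ℕ → ℕ, Set.range f = L → FextIdentifies none none M f) :
    ∃ σ : List ℕ, content σ ⊆ L ∧
      ∀ τ₁ τ₂ : List ℕ, σ <+: τ₁ → σ <+: τ₂ →
        content τ₁ ⊆ L → content τ₂ ⊆ L → W (M τ₁) = W (M τ₂) := by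
  classical
  by_contra hcon
  push_neg at hcon
  -- From the negation, every admissible σ has an extension with a different hypothesis set.
  have key : ∀ σ : List ℕ, ∃ τ, content σ ⊆ L →
      σ <+: τ ∧ content τ ⊆ L ∧ W (M τ) ≠ W (M σ) := by
    intro σ
    by_cases hσ : content σ ⊆ L
    · obtain ⟨τ₁, τ₂, h1, h2, hc1, hc2, hne⟩ := hcon σ hσ
      by_cases h : W (M τ₁) = W (M σ)
      · exact ⟨τ₂, fun _ => ⟨h2, hc2, fun he => hne (h.trans he.symm)⟩⟩
      · exact ⟨τ₁, fun _ => ⟨h1, hc1, h⟩⟩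
    · exact ⟨σ, fun h => absurd h hσ⟩
  choose F hF using key
  obtain ⟨g, hgL⟩ := Set.Countable.exists_eq_range (Set.to_countable L) hLinf.nonempty
  have hg : ∀ n, g n ∈ L := fun n => hgL ▸ Set.mem_range_self n
  -- the sequence of segments
  set s : ℕ → List ℕ := fun n => Nat.rec [] (fun n ih => F (ih ++ [g n])) n with hs
  have hsucc : ∀ n, s (n+1) = F (s n ++ [g n]) := fun n => rfl
  have hsub : ∀ n, content (s n) ⊆ L := by
    intro n
    induction n with
    | zero => intro x hx; simp [content, hs] at hx
    | succ n ih =>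
      have hc : content (s n ++ [g n]) ⊆ L := by
        intro x hx
        simp only [content, Set.mem_setOf_eq, List.mem_append, List.mem_singleton] at hx
        rcases hx with hx | hx
        · exact ih hx
        · exact hx ▸ hg n
      rw [hsucc]
      exact (hF _ hc).2.1
  have hcsub : ∀ n, content (s n ++ [g n]) ⊆ L := by
    intro n x hx
    simp only [content, Set.mem_setOf_eq, List.mem_append, List.mem_singleton] at hx
    rcases hx with hx | hx
    · exact hsub n hx
    · exact hx ▸ hg n
  have hpre : ∀ n, s n ++ [g n] <+: s (n+1) := by
    intro n; rw [hsucc]; exact (hF _ (hcsub n)).1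
  have hne' : ∀ n, W (M (s (n+1))) ≠ W (M (s n ++ [g n])) := by
    intro n; rw [hsucc]; exact (hF _ (hcsub n)).2.2
  have hstep : ∀ n, s n <+: s (n+1) := fun n =>
    (List.prefix_append _ _).trans (hpre n)
  have hchain : ∀ {k l : ℕ}, k ≤ l → s k <+: s l := by
    intro k l h
    induction l with
    | zero => obtain rfl := Nat.le_zero.mp h; exact List.prefix_refl _
    | succ l ih =>
      rcases Nat.lt_or_ge k (l+1) with h' | h'
      · exact (ih (Nat.lt_succ_iff.mp h')).trans (hstep l)
      · obtain rfl : k = l+1 := le_antisymm h h'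
        exact List.prefix_refl _
  have hlen : ∀ n, n ≤ (s n).length := by
    intro n
    induction n with
    | zero => exact Nat.zero_le _
    | succ n ih =>
      have h1 : (s n ++ [g n]).length ≤ (s (n+1)).length := (hpre n).length_le
      simp only [List.length_append, List.length_singleton] at h1
      omega
  -- getD agreement along prefixes
  have hpget : ∀ {l₁ l₂ : List ℕ}, l₁ <+: l₂ → ∀ {m : ℕ}, m < l₁.length →
      l₁.getD m 0 = l₂.getD m 0 := by
    rintro l₁ l₂ ⟨t, rfl⟩ m hm
    rw [List.getD_eq_getElem l₁ 0 hm,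
      List.getD_eq_getElem _ 0 (by simp only [List.length_append]; omega),
      List.getElem_append_left hm]
  -- the text
  set f : ℕ → ℕ := fun m => (s (m+1)).getD m 0 with hf
  have hagree : ∀ j m, m < (s j).length → f m = (s j).getD m 0 := by
    intro j m hm
    rcases le_total (m+1) j with h | h
    · exact hpget (hchain h) (Nat.lt_of_lt_of_le (Nat.lt_succ_self m) (hlen (m+1)))
    · exact (hpget (hchain h) hm).symm
  have hsegP : ∀ (t : List ℕ) (k : ℕ), t <+: s k → seg f t.length = t := by
    intro t k htk
    apply List.ext_getElem
    · simp [seg]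
    · intro i h1 h2
      have hik : i < (s k).length := lt_of_lt_of_le h2 htk.length_le
      have : (seg f t.length)[i]'h1 = f i := by
        simp [seg]
      rw [this, hagree k i hik, ← hpget htk h2, List.getD_eq_getElem t 0 h2]
  have hrange : Set.range f = L := by
    ext x
    constructor
    · rintro ⟨m, rfl⟩
      have hm : m < (s (m+1)).length := Nat.lt_of_lt_of_le (Nat.lt_succ_self m) (hlen (m+1))
      have : f m = (s (m+1))[m]'hm := by rw [hf]; exact List.getD_eq_getElem _ 0 hm
      rw [this]
      exact hsub (m+1) (List.getElem_mem hm)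
    · intro hx
      rw [hgL] at hx
      obtain ⟨n, rfl⟩ := hx
      refine ⟨(s n).length, ?_⟩
      have hlt : (s n).length < (s (n+1)).length := by
        have h1 : (s n ++ [g n]).length ≤ (s (n+1)).length := (hpre n).length_le
        simp only [List.length_append, List.length_singleton] at h1
        omega
      rw [hagree (n+1) _ hlt, ← hpget (hpre n) (by simp),
        List.getD_eq_getElem _ 0 (by simp),
        List.getElem_concat_length rfl]
  obtain ⟨S, -, hev, -, hWeq⟩ := hlearn f hrange
  obtain ⟨N, hN⟩ := Filter.eventually_atTop.mp hev
  have hL1 : N ≤ (s N ++ [g N]).length := by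
    have := hlen N; simp only [List.length_append, List.length_singleton]; omega
  have hL2 : N ≤ (s (N+1)).length := le_trans hL1 (hpre N).length_le
  have h1 : M (s N ++ [g N]) ∈ S := by
    have := hN _ hL1
    rwa [hsegP _ (N+1) (hpre N)] at this
  have h2 : M (s (N+1)) ∈ S := by
    have := hN _ hL2
    rwa [hsegP _ (N+1) (List.prefix_refl _)] at this
  exact hne' N (hWeq _ h2 _ h1)
end

section
/- Let L be an infinite c.e. subset of ℕ and let M be a learner. Suppose there is no finite sequence σ with content(σ) ⊆ L such that W_{M(τ₁)} = W_{M(τ₂)} for all finite sequences τ₁, τ₂ extending σ with content(τ₁), content(τ₂) ⊆ L. Then there exists a text f for L that M does not TxtFext*_*-identify; in particular, M does not TxtFext*_*-learn any family containing L. -/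
open Filter

/-- If no finite sequence with content in the infinite c.e. set `L`
stabilizes the hypotheses of `M` (in the sense that all extensions with content in `L`
code the same set), then some text for `L` is not TxtFext*_*-identified by `M`; in
particular `M` TxtFext*_*-learns no family containing `L`. -/
theorem no_stabilizing_sequence_implies_failure (L : Set ℕ) (hLce : IsCE L)
    (hLinf : L.Infinite) (M : List ℕ → ℕ) (hM : Computable M)
    (hno : ¬ ∃ σ : List ℕ, content σ ⊆ L ∧
      ∀ τ₁ τ₂ : List ℕ, σ <+: τ₁ → σ <+: τ₂ →
        content τ₁ ⊆ L → content τ₂ ⊆ L → W (M τ₁) = W (M τ₂)) :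
    (∃ f : ℕ → ℕ, Set.range f = L ∧ ¬ FextIdentifies none none M f) ∧
    (∀ 𝓕 : Set (Set ℕ), L ∈ 𝓕 → ¬ FextLearnsFamily none none M 𝓕) := by
  classical
  have hLcount : L.Countable := Set.to_countable L
  obtain ⟨g, hg⟩ := hLcount.exists_eq_range hLinf.nonempty
  push_neg at hno
  have key : ∀ σ : List ℕ, ∃ τ, σ <+: τ ∧
      (content σ ⊆ L → content τ ⊆ L ∧ W (M τ) ≠ W (M σ)) := by
    intro σ
    by_cases h : content σ ⊆ L
    · obtain ⟨τ₁, τ₂, h1, h2, hc1, hc2, hne⟩ := hno σ h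
      by_cases he : W (M τ₁) = W (M σ)
      · exact ⟨τ₂, h2, fun _ => ⟨hc2, fun h' => hne (he.trans h'.symm)⟩⟩
      · exact ⟨τ₁, h1, fun _ => ⟨hc1, he⟩⟩
    · exact ⟨σ, List.prefix_refl _, fun h' => absurd h' h⟩
  choose tau htau1 htau2 using key
  set s : ℕ → List ℕ := fun n => Nat.rec [] (fun n ih => tau ih ++ [g n]) n with hs
  have hsS : ∀ n, s (n + 1) = tau (s n) ++ [g n] := fun n => rfl
  have hcont : ∀ n, content (s n) ⊆ L := by
    intro n
    induction n with
    | zero => intro x hx; exact absurd hx (by simp [content, hs])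
    | succ n ih =>
      intro x hx
      have hx' : x ∈ tau (s n) ++ [g n] := by rw [← hsS n]; exact hx
      rcases List.mem_append.1 hx' with h | h
      · exact (htau2 (s n) ih).1 h
      · have : x = g n := by simpa using h
        subst this; rw [hg]; exact ⟨n, rfl⟩
  have hpre : ∀ n, s n <+: s (n + 1) := by
    intro n
    rw [hsS n]
    exact (htau1 (s n)).trans (List.prefix_append _ _)
  have hmono : ∀ m n, m ≤ n → s m <+: s n := by
    intro m n h
    induction h with
    | refl => exact List.prefix_refl _
    | step h ih => exact ih.trans (hpre _)
  have hlen : ∀ n, n ≤ (s n).length := by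
    intro n
    induction n with
    | zero => exact Nat.zero_le _
    | succ n ih =>
      have : (s (n + 1)).length = (tau (s n)).length + 1 := by rw [hsS n]; simp
      rw [this]
      exact Nat.succ_le_succ (ih.trans (htau1 (s n)).length_le)
  have hpg : ∀ {p q : List ℕ}, p <+: q → ∀ {k : ℕ}, k < p.length →
      q.getD k 0 = p.getD k 0 := by
    rintro p q ⟨t, rfl⟩ k hk
    exact List.getD_append _ _ _ _ hk
  have hcomp : ∀ {p q : List ℕ} {r : List ℕ}, p <+: r → q <+: r → ∀ {k : ℕ},
      k < p.length → k < q.length → p.getD k 0 = q.getD k 0 := by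
    intro p q r hp hq k hkp hkq
    rcases List.prefix_or_prefix_of_prefix hp hq with h | h
    · exact (hpg h hkp).symm
    · exact hpg h hkq
  set f : ℕ → ℕ := fun k => (s (k + 1)).getD k 0 with hf
  have hfk : ∀ (l : List ℕ) (n : ℕ), l <+: s n → ∀ k, k < l.length → f k = l.getD k 0 := by
    intro l n hl k hk
    have h1 : s (k + 1) <+: s (max n (k + 1)) := hmono (k + 1) (max n (k + 1)) (le_max_right _ _)
    have h2 : l <+: s (max n (k + 1)) := hl.trans (hmono n (max n (k + 1)) (le_max_left _ _))
    exact hcomp h1 h2 (lt_of_lt_of_le (Nat.lt_succ_self k) (hlen (k + 1))) hk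
  have hseg : ∀ (l : List ℕ) (n : ℕ), l <+: s n → seg f l.length = l := by
    intro l n hl
    apply List.ext_getElem (by simp [seg])
    intro k h1 h2
    have : (seg f l.length)[k] = f k := by simp [seg]
    rw [this, hfk l n hl k h2, List.getD_eq_getElem l 0 h2]
  have hrange : Set.range f = L := by
    apply Set.eq_of_subset_of_subset
    · rintro x ⟨k, rfl⟩
      have hk : k < (s (k + 1)).length := lt_of_lt_of_le (Nat.lt_succ_self k) (hlen (k + 1))
      have : f k = (s (k + 1))[k] := List.getD_eq_getElem _ 0 hk
      rw [this]
      exact hcont (k + 1) (List.getElem_mem hk)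
    · intro x hx
      rw [hg] at hx
      obtain ⟨n, rfl⟩ := hx
      set j := (tau (s n)).length with hj
      have hjlen : (s (n + 1)).length = j + 1 := by rw [hsS n]; simp [hj]
      have hval : (s (n + 1)).getD j 0 = g n := by rw [hsS n]; simp [hj]
      have : f j = (s (n + 1)).getD j 0 :=
        hfk (s (n + 1)) (n + 1) (List.prefix_refl _) j (by omega)
      exact ⟨j, this.trans hval⟩
  have hfail : ¬ FextIdentifies none none M f := by
    rintro ⟨S, -, hev, -, heqS⟩
    obtain ⟨N, hN⟩ := Filter.eventually_atTop.1 hev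
    have h1 : seg f (s N).length = s N := hseg (s N) N (List.prefix_refl _)
    have h2 : seg f (tau (s N)).length = tau (s N) := by
      apply hseg (tau (s N)) (N + 1)
      rw [hsS N]; exact List.prefix_append _ _
    have hσS : M (s N) ∈ S := by
      have := hN (s N).length (hlen N)
      rwa [h1] at this
    have hτS : M (tau (s N)) ∈ S := by
      have := hN (tau (s N)).length ((hlen N).trans (htau1 (s N)).length_le)
      rwa [h2] at this
    exact (htau2 (s N) (hcont N)).2 (heqS _ hτS _ hσS)
  refine ⟨⟨f, hrange, hfail⟩, ?_⟩
  intro 𝓕 h𝓕 hlearn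
  exact hfail (hlearn L h𝓕 f hrange)
end
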